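/- arXiv:1108.0760 — 10 statements merged into one kernel-verified Lean document; each statement's English description precedes it below -/
import Mathlib

section
/- Let K₁, K₂ ⊆ ℝⁿ be closed convex cones such that K₁ ∩ K₂ = {0} and the lineality space of K₂ is {0} (i.e., K₂ is pointed). Then there exists s ∈ ℝⁿ such that ⟨s, y⟩ ≤ 0 for all y ∈ K₁ and ⟨s, y⟩ > 0 for all y ∈ K₂ \ {0}. -/
open Matrix

open Set in
lemma isCompact_convexHull_aux {n : ℕ} {s : Set (Fin n → ℝ)} (hs : IsCompact s) :
    IsCompact (convexHull ℝ s) := by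
  rcases s.eq_empty_or_nonempty with rfl | ⟨x₀, hx₀⟩
  · simpa [convexHull_empty] using isCompact_empty
  classical
  set N := n + 1 with hN
  set g : (Fin N → ℝ) × (Fin N → (Fin n → ℝ)) → (Fin n → ℝ) :=
    fun p => ∑ i, p.1 i • p.2 i with hg
  have hgc : Continuous g := by
    apply continuous_finset_sum
    intro i _
    exact ((continuous_apply i).comp continuous_fst).smul
      ((continuous_apply i).comp continuous_snd)
  have hA : IsCompact ((stdSimplex ℝ (Fin N)) ×ˢ (Set.pi Set.univ fun _ : Fin N => s)) :=
    (isCompact_stdSimplex ℝ _).prod (isCompact_univ_pi fun _ => hs)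
  have himg : convexHull ℝ s =
      g '' ((stdSimplex ℝ (Fin N)) ×ˢ (Set.pi Set.univ fun _ : Fin N => s)) := by
    apply Subset.antisymm
    · intro x hx
      obtain ⟨ι, hι, z, w, hzs, hai, hwpos, hwsum, hwz⟩ :=
        eq_pos_convex_span_of_mem_convexHull hx
      have hcard : Fintype.card ι ≤ N := by
        have h1 := hai.card_le_finrank_succ
        have h2 : Module.finrank ℝ (vectorSpan ℝ (Set.range z)) ≤ n := by
          have := Submodule.finrank_le (vectorSpan ℝ (Set.range z))
          simpa [Module.finrank_fin_fun] using this
        omega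
      obtain ⟨e⟩ : Nonempty (ι ↪ Fin N) := by
        apply Function.Embedding.nonempty_of_card_le
        simpa using hcard
      set w' : Fin N → ℝ := Function.extend e w 0 with hw'
      set z' : Fin N → (Fin n → ℝ) := Function.extend e z (fun _ => x₀) with hz'
      have hwe : ∀ i, w' (e i) = w i := fun i => e.injective.extend_apply w 0 i
      have hze : ∀ i, z' (e i) = z i := fun i => e.injective.extend_apply z _ i
      have hw'0 : ∀ j, j ∉ Finset.univ.image e → w' j = 0 := by
        intro j hj
        rw [hw', Function.extend_apply']
        · rfl
        · rintro ⟨i, rfl⟩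
          exact hj (Finset.mem_image.2 ⟨i, Finset.mem_univ _, rfl⟩)
      refine ⟨(w', z'), ⟨⟨?_, ?_⟩, ?_⟩, ?_⟩
      · intro j
        by_cases hj : j ∈ Finset.univ.image e
        · obtain ⟨i, _, rfl⟩ := Finset.mem_image.1 hj
          show 0 ≤ w' (e i)
          rw [hwe]; exact (hwpos i).le
        · show 0 ≤ w' j
          rw [hw'0 j hj]
      · rw [← Finset.sum_subset (Finset.subset_univ (Finset.univ.image e))
          (fun j _ hj => hw'0 j hj)]
        rw [Finset.sum_image (fun a _ b _ h => e.injective h)]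
        simpa [hwe] using hwsum
      · intro j _
        by_cases hj : ∃ i, e i = j
        · obtain ⟨i, rfl⟩ := hj
          show z' (e i) ∈ s
          rw [hze]
          exact hzs ⟨i, rfl⟩
        · show z' j ∈ s
          rw [hz', Function.extend_apply' _ _ _ hj]
          exact hx₀
      · rw [hg]
        dsimp only
        rw [← Finset.sum_subset (Finset.subset_univ (Finset.univ.image e))
          (fun j _ hj => by rw [hw'0 j hj, zero_smul])]
        rw [Finset.sum_image (fun a _ b _ h => e.injective h)]
        simpa [hwe, hze] using hwz
    · rintro x ⟨⟨w, z⟩, ⟨⟨hw0, hw1⟩, hz⟩, rfl⟩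
      exact (convex_convexHull ℝ s).sum_mem (fun i _ => hw0 i) hw1
        (fun i _ => subset_convexHull ℝ s (hz i (Set.mem_univ i)))
  rw [himg]
  exact hA.image hgc

/-- Strict separation of a closed convex cone from a pointed closed convex cone
meeting it only at the origin. -/
theorem strict_separation_of_cones {n : ℕ} (K₁ K₂ : Set (Fin n → ℝ))
    (h₁closed : IsClosed K₁) (h₁conv : Convex ℝ K₁)
    (h₁cone : ∀ x ∈ K₁, ∀ t : ℝ, 0 ≤ t → t • x ∈ K₁)
    (h₂closed : IsClosed K₂) (h₂conv : Convex ℝ K₂)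
    (h₂cone : ∀ x ∈ K₂, ∀ t : ℝ, 0 ≤ t → t • x ∈ K₂)
    (hinter : K₁ ∩ K₂ = {0})
    (hpointed : {v | v ∈ K₂ ∧ -v ∈ K₂} = {0}) :
    ∃ s : Fin n → ℝ,
      (∀ y ∈ K₁, s ⬝ᵥ y ≤ 0) ∧ (∀ y ∈ K₂, y ≠ 0 → 0 < s ⬝ᵥ y) := by

  classical
  have h0K₁ : (0 : Fin n → ℝ) ∈ K₁ := by
    have : (0 : Fin n → ℝ) ∈ K₁ ∩ K₂ := by rw [hinter]; rfl
    exact this.1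
  -- the compact convex base of K₂
  set S : Set (Fin n → ℝ) := K₂ ∩ Metric.sphere 0 1 with hS
  have hScompact : IsCompact S := (isCompact_sphere 0 1).inter_left h₂closed
  set D : Set (Fin n → ℝ) := convexHull ℝ S with hD
  have hDcompact : IsCompact D := isCompact_convexHull_aux hScompact
  have hDK₂ : D ⊆ K₂ := convexHull_min (fun x hx => hx.1) h₂conv
  -- K₂ is closed under addition
  have hadd : ∀ x ∈ K₂, ∀ y ∈ K₂, x + y ∈ K₂ := by
    intro x hx y hy
    have h := h₂conv hx hy (by norm_num : (0:ℝ) ≤ 1/2) (by norm_num : (0:ℝ) ≤ 1/2)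
      (by norm_num)
    have := h₂cone _ h 2 (by norm_num)
    have heq : (2:ℝ) • ((1/2 : ℝ) • x + (1/2 : ℝ) • y) = x + y := by
      rw [smul_add, smul_smul, smul_smul]; norm_num
    rwa [heq] at this
  -- 0 is not in D
  have h0D : (0 : Fin n → ℝ) ∉ D := by
    intro h0
    obtain ⟨ι, hι, z, w, hzs, hai, hwpos, hwsum, hwz⟩ :=
      eq_pos_convex_span_of_mem_convexHull h0
    have hne : Nonempty ι := by
      by_contra h
      rw [not_nonempty_iff] at h
      simp [Finset.univ_eq_empty] at hwsum
    obtain ⟨i₀⟩ := hne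
    set v := w i₀ • z i₀ with hv
    have hvK : v ∈ K₂ := h₂cone _ (hzs ⟨i₀, rfl⟩).1 _ (hwpos i₀).le
    have hsumK : ∑ i ∈ Finset.univ.erase i₀, w i • z i ∈ K₂ := by
      apply Finset.sum_induction _ (· ∈ K₂) (fun a b ha hb => hadd a ha b hb)
      · have h0K₂ : (0 : Fin n → ℝ) ∈ K₂ :=
          (show (0 : Fin n → ℝ) ∈ K₁ ∩ K₂ by rw [hinter]; rfl).2
        exact h0K₂
      · intro i _
        exact h₂cone _ (hzs ⟨i, rfl⟩).1 _ (hwpos i).le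
    have hvneg : -v ∈ K₂ := by
      have h1 : v + ∑ i ∈ Finset.univ.erase i₀, w i • z i = 0 := by
        have h2 := Finset.add_sum_erase Finset.univ (fun i => w i • z i) (Finset.mem_univ i₀)
        rw [hwz] at h2
        exact h2
      have h2 := eq_neg_of_add_eq_zero_left h1
      rw [h2, neg_neg]
      exact hsumK
    have hv0 : v = 0 := by
      have : v ∈ ({0} : Set (Fin n → ℝ)) := by rw [← hpointed]; exact ⟨hvK, hvneg⟩
      simpa using this
    have hz0 : z i₀ = 0 := by
      have := smul_eq_zero.1 hv0
      rcases this with h | h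
      · exact absurd h (hwpos i₀).ne'
      · exact h
    have : ‖z i₀‖ = 1 := by
      have := (hzs ⟨i₀, rfl⟩).2
      simpa using this
    rw [hz0] at this
    simp at this
  -- K₁ and D are disjoint
  have hdisj : Disjoint K₁ D := by
    rw [Set.disjoint_left]
    intro d hd₁ hd₂
    have : d ∈ K₁ ∩ K₂ := ⟨hd₁, hDK₂ hd₂⟩
    rw [hinter] at this
    exact h0D (Set.mem_singleton_iff.1 this ▸ hd₂)
  obtain ⟨f, u, v, hf₁, huv, hf₂⟩ :=
    geometric_hahn_banach_closed_compact h₁conv h₁closed (convex_convexHull ℝ S)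
      hDcompact hdisj
  have hu0 : 0 < u := by
    have := hf₁ 0 h0K₁
    simpa using this
  -- the separating vector
  set s : Fin n → ℝ := fun i => f (fun j => if i = j then 1 else 0) with hs
  have hfs : ∀ y : Fin n → ℝ, f y = s ⬝ᵥ y := by
    intro y
    have h := LinearMap.pi_apply_eq_sum_univ (↑f : (Fin n → ℝ) →ₗ[ℝ] ℝ) y
    simp only [ContinuousLinearMap.coe_coe] at h
    rw [dotProduct, h]
    exact Finset.sum_congr rfl fun i _ => by simp [hs, mul_comm]
  refine ⟨s, ?_, ?_⟩
  · intro y hy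
    rw [← hfs]
    by_contra h
    push_neg at h
    -- f y > 0; scale to contradict f < u on K₁
    have ht : (0:ℝ) ≤ (|u| + 1) / f y := div_nonneg (by positivity) h.le
    have hmem := h₁cone y hy _ ht
    have := hf₁ _ hmem
    rw [ContinuousLinearMap.map_smul] at this
    have hfy : ((|u| + 1) / f y) • f y = |u| + 1 := by
      rw [smul_eq_mul, div_mul_cancel₀ _ (ne_of_gt h)]
    rw [smul_eq_mul] at this
    rw [div_mul_cancel₀ _ (ne_of_gt h)] at this
    have : |u| + 1 < u := this
    have := abs_nonneg u
    have := le_abs_self u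
    linarith
  · intro y hy hy0
    rw [← hfs]
    have hnorm : ‖y‖ ≠ 0 := norm_ne_zero_iff.2 hy0
    set z := ‖y‖⁻¹ • y with hz
    have hzK : z ∈ K₂ := h₂cone y hy _ (inv_nonneg.2 (norm_nonneg y))
    have hznorm : z ∈ Metric.sphere (0 : Fin n → ℝ) 1 := by
      simp [hz, norm_smul, abs_of_nonneg (inv_nonneg.2 (norm_nonneg y)),
        inv_mul_cancel₀ hnorm]
    have hzD : z ∈ D := subset_convexHull ℝ S ⟨hzK, hznorm⟩
    have hfz : v < f z := hf₂ z hzD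
    have hyz : y = ‖y‖ • z := by
      rw [hz, smul_smul, mul_inv_cancel₀ hnorm, one_smul]
    rw [hyz, ContinuousLinearMap.map_smul, smul_eq_mul]
    have : 0 < f z := lt_trans (lt_trans hu0 huv) hfz
    positivity
end

section
/- Let A be an m×n real matrix with columns a₁,…,aₙ. For every index i ∈ {1,…,n}, the following are equivalent: (1) there exists x ∈ ℝⁿ with Ax = 0, x ≥ 0, and xᵢ > 0; (2) every y ∈ ℝᵐ with Aᵀy ≥ 0 satisfies aᵢᵀy = 0. -/
open Matrix

section ConeClosed

variable {E : Type*} [NormedAddCommGroup E] [NormedSpace ℝ E] [FiniteDimensional ℝ E]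
variable {ι : Type*} [DecidableEq ι]

/-- The cone generated by the vectors `a j`, `j ∈ s`. -/
def finsetCone (a : ι → E) (s : Finset ι) : Set E :=
  {y : E | ∃ x : ι → ℝ, (∀ j, 0 ≤ x j) ∧ ∑ j ∈ s, x j • a j = y}

theorem isClosed_finsetCone (a : ι → E) (s : Finset ι) : IsClosed (finsetCone a s) := by
  induction s using Finset.strongInduction with
  | _ s ih =>
  by_cases hli : LinearIndependent ℝ (fun j : s => a j)
  · -- linearly independent generators: closed embedding of the positive orthant
    let L : (s → ℝ) →ₗ[ℝ] E :=
      { toFun := fun x => ∑ j : s, x j • a (j : ι)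
        map_add' := by intro x y; simp [add_smul, Finset.sum_add_distrib]
        map_smul' := by intro c x; simp [smul_smul, Finset.smul_sum] }
    have hker : LinearMap.ker L = ⊥ := by
      rw [LinearMap.ker_eq_bot']
      intro x hx
      funext j
      exact Fintype.linearIndependent_iff.mp hli x hx j
    have hset : finsetCone a s = L '' {x : s → ℝ | ∀ j, 0 ≤ x j} := by
      ext y
      constructor
      · rintro ⟨x, hx, hsum⟩
        refine ⟨fun j => x j, fun j => hx j, ?_⟩
        show ∑ j : s, x (j : ι) • a (j : ι) = y
        rw [Finset.sum_coe_sort s (fun j => x j • a j)]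
        exact hsum
      · rintro ⟨x, hx, hsum⟩
        refine ⟨fun j => if h : j ∈ s then x ⟨j, h⟩ else 0, ?_, ?_⟩
        · intro j
          by_cases h : j ∈ s
          · simpa [h] using hx ⟨j, h⟩
          · simp [h]
        · rw [← Finset.sum_coe_sort s]
          simpa [L] using hsum
    rw [hset]
    have hpos : IsClosed {x : s → ℝ | ∀ j, 0 ≤ x j} := by
      have : {x : s → ℝ | ∀ j, 0 ≤ x j} = ⋂ j, {x | 0 ≤ x j} := by
        ext x; simp [Set.mem_iInter]
      rw [this]
      exact isClosed_iInter fun j => isClosed_le continuous_const (continuous_apply j)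
    exact (LinearMap.isClosedEmbedding_of_injective hker).isClosedMap _ hpos
  · -- linearly dependent generators: reduce to smaller finsets
    obtain ⟨g, hgsum, i₀, hgi₀⟩ := Fintype.not_linearIndependent_iff.mp hli
    -- produce a relation with a strictly positive coefficient somewhere
    obtain ⟨c, hc0, hcsum, j₁, hj₁s, hj₁pos⟩ :
        ∃ c : ι → ℝ, (∀ j, j ∉ s → c j = 0) ∧ (∑ j ∈ s, c j • a j = 0) ∧
          ∃ j ∈ s, 0 < c j := by
      rcases lt_trichotomy (g i₀) 0 with hneg | hzero | hpos
      · refine ⟨fun j => if h : j ∈ s then -g ⟨j, h⟩ else 0, fun j hj => by simp [hj], ?_,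
          i₀, i₀.2, by simp only [i₀.2, dif_pos]; linarith⟩
        rw [← Finset.sum_coe_sort s]
        simp only [Finset.coe_mem, dif_pos, Subtype.coe_eta, neg_smul,
          Finset.sum_neg_distrib]
        rw [hgsum, neg_zero]
      · exact absurd hzero hgi₀
      · refine ⟨fun j => if h : j ∈ s then g ⟨j, h⟩ else 0, fun j hj => by simp [hj], ?_,
          i₀, i₀.2, by simp only [i₀.2, dif_pos]; simpa using hpos⟩
        rw [← Finset.sum_coe_sort s]
        simpa using hgsum
    classical
    set T : Finset ι := s.filter (fun j => 0 < c j) with hT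
    have hTne : T.Nonempty := ⟨j₁, Finset.mem_filter.mpr ⟨hj₁s, hj₁pos⟩⟩
    have hset : finsetCone a s = ⋃ j ∈ T, finsetCone a (s.erase j) := by
      ext y
      constructor
      · rintro ⟨x, hx, hsum⟩
        obtain ⟨j₀, hj₀T, hmin⟩ := T.exists_min_image (fun j => x j / c j) hTne
        have hj₀s : j₀ ∈ s := (Finset.mem_filter.mp hj₀T).1
        have hcj₀ : 0 < c j₀ := (Finset.mem_filter.mp hj₀T).2
        set t : ℝ := x j₀ / c j₀ with ht
        have ht0 : 0 ≤ t := div_nonneg (hx j₀) hcj₀.le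
        refine Set.mem_biUnion hj₀T ?_
        refine ⟨fun k => x k - t * c k, ?_, ?_⟩
        · intro k
          show 0 ≤ x k - t * c k
          rcases le_or_gt (c k) 0 with hck | hck
          · have : t * c k ≤ 0 := mul_nonpos_of_nonneg_of_nonpos ht0 hck
            have := hx k
            linarith
          · have hks : k ∈ s := by
              by_contra hk; exact absurd (hc0 k hk) (ne_of_gt hck)
            have hkT : k ∈ T := Finset.mem_filter.mpr ⟨hks, hck⟩
            have h1 : t ≤ x k / c k := hmin k hkT
            have : t * c k ≤ x k := (le_div_iff₀ hck).mp h1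
            linarith
        · have hz : x j₀ - t * c j₀ = 0 := by
            rw [ht, div_mul_cancel₀ _ (ne_of_gt hcj₀)]; ring
          have hz' : (x j₀ - t * c j₀) • a j₀ = 0 := by rw [hz, zero_smul]
          rw [Finset.sum_erase s hz']
          have hcongr : ∀ k ∈ s, (x k - t * c k) • a k = x k • a k - t • (c k • a k) := by
            intro k _; rw [sub_smul, smul_smul]
          rw [Finset.sum_congr rfl hcongr, Finset.sum_sub_distrib, ← Finset.smul_sum,
            hcsum, smul_zero, sub_zero, hsum]
      · intro hy
        obtain ⟨j, hjT, x, hx, hsum⟩ : ∃ j ∈ T, ∃ x : ι → ℝ,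
            (∀ k, 0 ≤ x k) ∧ ∑ k ∈ s.erase j, x k • a k = y := by
          simpa [Set.mem_iUnion, finsetCone] using hy
        have hjs : j ∈ s := (Finset.mem_filter.mp hjT).1
        refine ⟨Function.update x j 0, ?_, ?_⟩
        · intro k
          by_cases hk : k = j
          · rw [hk, Function.update_self]
          · simpa [Function.update_of_ne hk] using hx k
        · rw [← Finset.add_sum_erase s _ hjs]
          have heq : ∑ k ∈ s.erase j, Function.update x j 0 k • a k
              = ∑ k ∈ s.erase j, x k • a k := by
            refine Finset.sum_congr rfl fun k hk => ?_
            rw [Function.update_of_ne (Finset.ne_of_mem_erase hk)]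
          rw [heq, hsum]
          simp
    rw [hset]
    refine Set.Finite.isClosed_biUnion T.finite_toSet fun j hj => ?_
    exact ih (s.erase j) (Finset.erase_ssubset (Finset.mem_filter.mp hj).1)

end ConeClosed

open scoped InnerProductSpace

/-- Farkas-type equivalence: the index `i` admits a primal solution with `xᵢ > 0`
iff every dual solution has `aᵢᵀ y = 0`. -/
theorem primal_pos_iff_dual_zero {m n : ℕ} (A : Matrix (Fin m) (Fin n) ℝ) (i : Fin n) :
    (∃ x : Fin n → ℝ, A *ᵥ x = 0 ∧ (∀ j, 0 ≤ x j) ∧ 0 < x i) ↔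
    (∀ y : Fin m → ℝ, (∀ j, 0 ≤ (Aᵀ *ᵥ y) j) → (Aᵀ *ᵥ y) i = 0) := by
  constructor
  · rintro ⟨x, hAx, hx0, hxi⟩ y hy
    have key : ∑ j, x j * (Aᵀ *ᵥ y) j = 0 := by
      have h1 : ∑ j, x j * (Aᵀ *ᵥ y) j = ∑ i', (A *ᵥ x) i' * y i' := by
        simp only [Matrix.mulVec, dotProduct, Matrix.transpose_apply,
          Finset.mul_sum, Finset.sum_mul]
        rw [Finset.sum_comm]
        exact Finset.sum_congr rfl fun i' _ => Finset.sum_congr rfl fun j _ => by ring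
      rw [h1, hAx]
      simp
    have hall := (Finset.sum_eq_zero_iff_of_nonneg
      (fun j _ => mul_nonneg (hx0 j) (hy j))).mp key i (Finset.mem_univ i)
    exact (mul_eq_zero.mp hall).resolve_left (ne_of_gt hxi)
  · intro H
    let a : Fin n → EuclideanSpace ℝ (Fin m) := fun j => WithLp.toLp 2 (fun i' => A i' j)
    let C : ConvexCone ℝ (EuclideanSpace ℝ (Fin m)) :=
      { carrier := finsetCone a Finset.univ
        smul_mem' := by
          rintro c hc y ⟨x, hx, hsum⟩
          exact ⟨fun j => c * x j, fun j => mul_nonneg hc.le (hx j), by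
            simp only [mul_smul]
            rw [← Finset.smul_sum, hsum]⟩
        add_mem' := by
          rintro y ⟨x, hx, hs⟩ z ⟨x', hx', hs'⟩
          exact ⟨fun j => x j + x' j, fun j => add_nonneg (hx j) (hx' j), by
            simp only [add_smul]
            rw [Finset.sum_add_distrib, hs, hs']⟩ }
    have hCclosed : IsClosed (C : Set (EuclideanSpace ℝ (Fin m))) := isClosed_finsetCone a Finset.univ
    have hCne : (C : Set (EuclideanSpace ℝ (Fin m))).Nonempty :=
      ⟨0, (0 : Fin n → ℝ), fun j => le_refl 0, by simp⟩
    have hmem : ∀ j, a j ∈ C := by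
      intro j
      refine ⟨fun k => if k = j then 1 else 0, fun k => by positivity, ?_⟩
      simp [ite_smul]
    have hip : ∀ (j : Fin n) (y : EuclideanSpace ℝ (Fin m)),
        ⟪a j, y⟫_ℝ = (Aᵀ *ᵥ y) j := by
      intro j y
      simp [PiLp.inner_apply, RCLike.inner_apply, Matrix.mulVec, dotProduct,
        Matrix.transpose_apply, a, mul_comm]
    have hb : (-(a i)) ∈ C := by
      by_contra hnb
      obtain ⟨y, hy1, hy2⟩ :=
        ProperCone.hyperplane_separation'
          (⟨C.toPointedCone (.of_nonempty_of_isClosed hCne hCclosed), hCclosed⟩ : ProperCone ℝ _) hnb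
      rw [real_inner_comm] at hy2
      have hy0 : ∀ j, 0 ≤ (Aᵀ *ᵥ y) j := fun j => (hip j y) ▸ hy1 (a j) (hmem j)
      have hzero : (Aᵀ *ᵥ y) i = 0 := H y hy0
      have : ⟪y, -(a i)⟫_ℝ = 0 := by
        rw [inner_neg_right, real_inner_comm, hip i y, hzero, neg_zero]
      rw [this] at hy2
      exact lt_irrefl 0 hy2
    obtain ⟨x, hx, hsum⟩ := hb
    refine ⟨fun j => x j + (if j = i then 1 else 0), ?_, ?_, ?_⟩
    · funext i'
      have hfun : (∑ j, x j • a j : EuclideanSpace ℝ (Fin m)) i' = -(A i' i) := by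
        rw [hsum]; rfl
      have hpi : (∑ j : Fin n, x j • (fun i'' => A i'' j) : Fin m → ℝ) i'
          = ∑ j : Fin n, (x j • (fun i'' => A i'' j) : Fin m → ℝ) i' :=
        Finset.sum_apply i' Finset.univ _
      have hsum' : ∑ j, x j * A i' j = -(A i' i) := by
        rw [← hfun]
        rw [WithLp.ofLp_sum]
        exact (hpi.trans (by simp [Pi.smul_apply] :
          ∑ j : Fin n, (x j • (fun i'' => A i'' j) : Fin m → ℝ) i' = ∑ j, x j * A i' j)).symm
      show ∑ j, A i' j * (x j + (if j = i then 1 else 0)) = 0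
      simp only [mul_add, Finset.sum_add_distrib, mul_ite, mul_one, mul_zero,
        Finset.sum_ite_eq' Finset.univ i, Finset.mem_univ, if_true]
      have : ∑ j, A i' j * x j = ∑ j, x j * A i' j :=
        Finset.sum_congr rfl fun j _ => mul_comm _ _
      rw [this, hsum']
      ring
    · intro j
      by_cases hj : j = i
      · simp only [hj, if_true]
        linarith [hx i]
      · simp only [hj, if_false, add_zero]
        exact hx j
    · show 0 < x i + if i = i then 1 else 0
      rw [if_pos rfl]
      linarith [hx i]
end

section
/- Let A be an m×n real matrix with columns a₁,…,aₙ. For every index i ∈ {1,…,n}, the following are equivalent: (1) there exists y ∈ ℝᵐ with Aᵀy ≥ 0 and aᵢᵀy > 0; (2) every x ∈ ℝⁿ with Ax = 0 and x ≥ 0 satisfies xᵢ = 0. -/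
open Matrix Finset RealInnerProductSpace

set_option linter.unusedSectionVars false

section FarkasHelpers

variable {E : Type*} [NormedAddCommGroup E] [InnerProductSpace ℝ E] [FiniteDimensional ℝ E]
variable {n : ℕ}

/-- Conic Carathéodory: any nonnegative combination can be rewritten with
linearly independent support. -/
lemma conic_caratheodory (v : Fin n → E) :
    ∀ (N : ℕ) (x : Fin n → ℝ), (univ.filter (fun j => x j ≠ 0)).card ≤ N → (∀ j, 0 ≤ x j) →
    ∃ x' : Fin n → ℝ, (∀ j, 0 ≤ x' j) ∧ ∑ j, x' j • v j = ∑ j, x j • v j ∧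
      LinearIndependent ℝ (fun j : {j : Fin n // x' j ≠ 0} => v j) := by
  intro N
  induction N with
  | zero =>
    intro x hcard hx
    refine ⟨x, hx, rfl, ?_⟩
    have hempty : ∀ j, x j = 0 := by
      intro j
      by_contra hj
      have : j ∈ univ.filter (fun j => x j ≠ 0) := by simp [hj]
      have := card_pos.mpr ⟨j, this⟩
      omega
    have : IsEmpty {j : Fin n // x j ≠ 0} := ⟨fun ⟨j, hj⟩ => hj (hempty j)⟩
    exact linearIndependent_empty_type
  | succ N ih =>
    intro x hcard hx
    by_cases hli : LinearIndependent ℝ (fun j : {j : Fin n // x j ≠ 0} => v j)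
    · exact ⟨x, hx, rfl, hli⟩
    · obtain ⟨g, hgsum, j₀, hg₀⟩ := Fintype.not_linearIndependent_iff.mp hli
      -- extend g (or -g) to a vector d supported on the support of x with some positive entry
      obtain ⟨d, hdsupp, hdsum, j₁, hd₁⟩ :
          ∃ d : Fin n → ℝ, (∀ j, x j = 0 → d j = 0) ∧ (∑ j, d j • v j = 0) ∧ ∃ j, 0 < d j := by
        set d0 : Fin n → ℝ := fun j => if h : x j ≠ 0 then g ⟨j, h⟩ else 0 with hd0
        have hsupp : ∀ j, x j = 0 → d0 j = 0 := by
          intro j hj; simp [hd0, hj]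
        have hsum : ∑ j, d0 j • v j = 0 := by
          have h1 : ∑ j, d0 j • v j = ∑ j ∈ univ.filter (fun j => x j ≠ 0), d0 j • v j := by
            refine (Finset.sum_filter_of_ne ?_).symm
            intro j _ hne
            by_contra hxj
            rw [hsupp j hxj] at hne
            simp at hne
          have h2 : ∑ j ∈ univ.filter (fun j => x j ≠ 0), d0 j • v j
              = ∑ j : {j : Fin n // x j ≠ 0}, d0 j.1 • v j.1 := by
            exact Finset.sum_subtype _ (by simp) _
          have h3 : ∑ j : {j : Fin n // x j ≠ 0}, d0 j.1 • v j.1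
              = ∑ j : {j : Fin n // x j ≠ 0}, g j • v j.1 := by
            refine Fintype.sum_congr _ _ (fun j => ?_)
            simp [hd0, j.2]
          rw [h1, h2, h3, hgsum]
        have hd0j : d0 j₀.1 = g j₀ := by simp [hd0, j₀.2]
        rcases hg₀.lt_or_gt with hneg | hpos
        · refine ⟨-d0, fun j hj => by simp [hsupp j hj], ?_, j₀.1, ?_⟩
          · rw [← neg_eq_zero] at hsum
            rw [← hsum, ← Finset.sum_neg_distrib]
            exact Finset.sum_congr rfl (fun j _ => by simp)
          · simpa [hd0j] using hneg
        · exact ⟨d0, hsupp, hsum, j₀.1, by rwa [hd0j]⟩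
      -- shrink the support using d
      have hTne : (univ.filter (fun j => 0 < d j)).Nonempty := ⟨j₁, by simp [hd₁]⟩
      obtain ⟨j₂, hj₂mem, hj₂⟩ := Finset.exists_mem_eq_inf' hTne (fun j => x j / d j)
      set t : ℝ := (univ.filter (fun j => 0 < d j)).inf' hTne (fun j => x j / d j) with ht
      have hdj₂ : 0 < d j₂ := by simpa using hj₂mem
      have ht0 : 0 ≤ t := by
        rw [ht]
        apply Finset.le_inf'
        intro j hj
        have : 0 < d j := by simpa using hj
        exact div_nonneg (hx j) this.le
      set x' : Fin n → ℝ := fun j => x j - t * d j with hx'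
      have hx'0 : ∀ j, 0 ≤ x' j := by
        intro j
        rcases le_or_gt (d j) 0 with h | h
        · have : t * d j ≤ 0 := mul_nonpos_of_nonneg_of_nonpos ht0 h
          simp only [hx']; linarith [hx j]
        · have h1 : t ≤ x j / d j := by
            rw [ht]; exact Finset.inf'_le _ (by simp [h])
          have := (le_div_iff₀ h).mp h1
          simp only [hx']; linarith
      have hx'sum : ∑ j, x' j • v j = ∑ j, x j • v j := by
        simp only [hx', sub_smul, Finset.sum_sub_distrib]
        have h2 : ∑ j, (t * d j) • v j = t • ∑ j, d j • v j := by
          rw [Finset.smul_sum]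
          exact Finset.sum_congr rfl (fun j _ => by rw [smul_smul])
        rw [h2, hdsum, smul_zero, sub_zero]
      have hj₂x : x j₂ ≠ 0 := by
        intro h0
        rw [hdsupp j₂ h0] at hdj₂; exact lt_irrefl 0 hdj₂
      have hsub : (univ.filter (fun j => x' j ≠ 0)) ⊂ (univ.filter (fun j => x j ≠ 0)) := by
        constructor
        · intro j hj
          simp only [mem_filter, mem_univ, true_and] at hj ⊢
          intro hxj
          exact hj (by simp [hx', hxj, hdsupp j hxj])
        · intro hsub'
          have hmem : j₂ ∈ univ.filter (fun j => x' j ≠ 0) := hsub' (by simp [hj₂x])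
          simp only [mem_filter, mem_univ, true_and] at hmem
          apply hmem
          show x j₂ - t * d j₂ = 0
          rw [hj₂, div_mul_cancel₀ _ (ne_of_gt hdj₂), sub_self]
      have hcard' : (univ.filter (fun j => x' j ≠ 0)).card ≤ N := by
        have := Finset.card_lt_card hsub
        omega
      obtain ⟨x'', h1, h2, h3⟩ := ih x' hcard' hx'0
      exact ⟨x'', h1, h2.trans hx'sum, h3⟩

lemma coneSet_isClosed (v : Fin n → E) :
    IsClosed {w : E | ∃ x : Fin n → ℝ, (∀ j, 0 ≤ x j) ∧ ∑ j, x j • v j = w} := by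
  have key : {w : E | ∃ x : Fin n → ℝ, (∀ j, 0 ≤ x j) ∧ ∑ j, x j • v j = w}
      = ⋃ S : {S : Finset (Fin n) // LinearIndependent ℝ (fun j : S => v j)},
          (Fintype.linearCombination ℝ (fun j : S.1 => v ↑j)) '' {c | ∀ j, 0 ≤ c j} := by
    ext w
    simp only [Set.mem_setOf_eq, Set.mem_iUnion, Set.mem_image]
    constructor
    · rintro ⟨x, hx, hw⟩
      obtain ⟨x', hx'0, hx'sum, hx'li⟩ := conic_caratheodory v
        (univ.filter (fun j => x j ≠ 0)).card x le_rfl hx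
      set S : Finset (Fin n) := univ.filter (fun j => x' j ≠ 0) with hS
      have hmemiff : ∀ j : Fin n, j ∈ S ↔ x' j ≠ 0 := by intro j; simp [hS]
      have hli : LinearIndependent ℝ (fun j : S => v j) := by
        have h := hx'li.comp (Equiv.subtypeEquivRight hmemiff) (Equiv.injective _)
        have heq : ((fun j : {j : Fin n // x' j ≠ 0} => v j.1) ∘ (Equiv.subtypeEquivRight hmemiff))
            = (fun j : S => v j.1) := by
          funext j; rfl
        rwa [heq] at h
      refine ⟨⟨S, hli⟩, fun j => x' j.1, fun j => hx'0 j.1, ?_⟩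
      rw [Fintype.linearCombination_apply]
      have h1 : ∑ j : S, x' j.1 • v j.1 = ∑ j ∈ S, x' j • v j :=
        (Finset.sum_subtype _ (fun j => Iff.rfl) (fun j => x' j • v j)).symm
      have h2 : ∑ j ∈ S, x' j • v j = ∑ j, x' j • v j := by
        apply Finset.sum_subset (subset_univ _)
        intro j _ hj
        have : x' j = 0 := by
          by_contra h; exact hj (by simp [hS, h])
        simp [this]
      rw [h1, h2, hx'sum, hw]
    · rintro ⟨S, c, hc, hw⟩
      rw [Fintype.linearCombination_apply] at hw
      refine ⟨fun j => if h : j ∈ S.1 then c ⟨j, h⟩ else 0, fun j => ?_, ?_⟩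
      · by_cases h : j ∈ S.1 <;> simp [h, hc _]
      · rw [← hw]
        rw [← Finset.sum_subset (subset_univ S.1) (by intro j _ hj; simp [hj])]
        rw [Finset.sum_subtype _ (fun j => Iff.rfl) (fun j => (if h : j ∈ S.1 then c ⟨j, h⟩ else 0) • v j)]
        refine Fintype.sum_congr _ _ (fun j => ?_)
        simp [j.2]
  rw [key]
  apply isClosed_iUnion_of_finite
  intro S
  have hinj : Function.Injective (Fintype.linearCombination ℝ (fun j : S.1 => v ↑j)) := by
    rw [← LinearMap.ker_eq_bot]
    rw [LinearMap.ker_eq_bot']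
    intro c hc
    rw [Fintype.linearCombination_apply] at hc
    funext j
    exact Fintype.linearIndependent_iff.mp S.2 c hc j
  have hemb := LinearMap.isClosedEmbedding_of_injective (𝕜 := ℝ)
    (f := Fintype.linearCombination ℝ (fun j : S.1 => v ↑j)) (by rwa [LinearMap.ker_eq_bot])
  apply hemb.isClosedMap
  have : {c : S.1 → ℝ | ∀ j, 0 ≤ c j} = ⋂ j, {c : S.1 → ℝ | 0 ≤ c j} := by
    ext c; simp
  rw [this]
  exact isClosed_iInter (fun j => isClosed_le continuous_const (continuous_apply j))

/-- Farkas separation: if `b` is not a nonnegative combination of the `v j`,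
then some `y` has nonnegative inner product with all `v j` and negative with `b`. -/
lemma farkas_sep (v : Fin n → E) (b : E)
    (hb : ∀ x : Fin n → ℝ, (∀ j, 0 ≤ x j) → ∑ j, x j • v j ≠ b) :
    ∃ y : E, (∀ j, 0 ≤ ⟪v j, y⟫) ∧ ⟪y, b⟫ < 0 := by
  set K : ConvexCone ℝ E :=
    { carrier := {w : E | ∃ x : Fin n → ℝ, (∀ j, 0 ≤ x j) ∧ ∑ j, x j • v j = w}
      smul_mem' := by
        rintro c hc w ⟨x, hx, rfl⟩
        exact ⟨c • x, fun j => mul_nonneg hc.le (hx j), by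
          rw [Finset.smul_sum]
          exact Finset.sum_congr rfl (fun j _ => by simp [smul_smul])⟩
      add_mem' := by
        rintro w₁ ⟨x₁, hx₁, rfl⟩ w₂ ⟨x₂, hx₂, rfl⟩
        exact ⟨x₁ + x₂, fun j => add_nonneg (hx₁ j) (hx₂ j), by
          rw [← Finset.sum_add_distrib]
          exact Finset.sum_congr rfl (fun j _ => by simp [add_smul])⟩ } with hK
  have hne : (K : Set E).Nonempty := ⟨0, ⟨0, fun j => le_rfl, by simp⟩⟩
  have hcl : IsClosed (K : Set E) := coneSet_isClosed v
  have hbmem : b ∉ K := by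
    rintro ⟨x, hx, hsum⟩
    exact hb x hx hsum
  obtain ⟨y, h1, h2⟩ : ∃ y : E, (∀ x ∈ K, 0 ≤ ⟪x, y⟫) ∧ ⟪y, b⟫ < 0 := by
    let P : ProperCone ℝ E :=
      ⟨K.toPointedCone (ConvexCone.Pointed.of_nonempty_of_isClosed hne hcl), hcl⟩
    obtain ⟨y, h1, h2⟩ := ProperCone.hyperplane_separation' (C := P) (x₀ := b) hbmem
    exact ⟨y, h1, by rwa [real_inner_comm] at h2⟩
  refine ⟨y, fun j => h1 (v j) ⟨Pi.single j 1, fun k => by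
    by_cases h : k = j
    · subst h; simp
    · rw [Pi.single_eq_of_ne h], by
      rw [Finset.sum_eq_single j (fun k _ hk => by rw [Pi.single_eq_of_ne hk, zero_smul])
        (by simp)]
      simp⟩, h2⟩

end FarkasHelpers

/-- Farkas-type equivalence: the index `i` admits a dual solution with `aᵢᵀ y > 0`
iff every primal solution has `xᵢ = 0`. -/
theorem dual_pos_iff_primal_zero {m n : ℕ} (A : Matrix (Fin m) (Fin n) ℝ) (i : Fin n) :
    (∃ y : Fin m → ℝ, (∀ j, 0 ≤ (Aᵀ *ᵥ y) j) ∧ 0 < (Aᵀ *ᵥ y) i) ↔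
    (∀ x : Fin n → ℝ, A *ᵥ x = 0 → (∀ j, 0 ≤ x j) → x i = 0) := by
  constructor
  · rintro ⟨y, hy, hyi⟩ x hAx hx
    have h0 : ∑ j, (Aᵀ *ᵥ y) j * x j = 0 := by
      have : (Aᵀ *ᵥ y) ⬝ᵥ x = 0 := by
        rw [Matrix.mulVec_transpose, ← Matrix.dotProduct_mulVec, hAx, dotProduct_zero]
      simpa [dotProduct] using this
    have hterm : (Aᵀ *ᵥ y) i * x i = 0 := by
      have := (Finset.sum_eq_zero_iff_of_nonneg
        (fun j _ => mul_nonneg (hy j) (hx j))).mp h0 i (mem_univ i)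
      exact this
    rcases mul_eq_zero.mp hterm with h | h
    · exact absurd h (ne_of_gt hyi)
    · exact h
  · intro h
    -- build the augmented columns in `EuclideanSpace ℝ (Fin (m+1))`
    set f : Fin n → (Fin (m+1) → ℝ) :=
      fun j => Fin.lastCases (if j = i then 1 else 0) (fun k' => A k' j) with hf
    set V : Fin n → EuclideanSpace ℝ (Fin (m+1)) :=
      fun j => (WithLp.equiv 2 (Fin (m+1) → ℝ)).symm (f j) with hV
    set bfun : Fin (m+1) → ℝ := Fin.lastCases 1 (fun _ => 0) with hbfun
    set b : EuclideanSpace ℝ (Fin (m+1)) := (WithLp.equiv 2 (Fin (m+1) → ℝ)).symm bfun with hb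
    have hfar : ∀ x : Fin n → ℝ, (∀ j, 0 ≤ x j) → ∑ j, x j • V j ≠ b := by
      intro x hx hsum
      have hcoord : ∀ k, ∑ j, x j * f j k = bfun k := by
        intro k
        have h1 := congrArg
          (fun z => (WithLp.linearEquiv 2 ℝ (Fin (m+1) → ℝ)) z k) hsum
        rw [map_sum, Finset.sum_apply] at h1
        simpa [hV, hb, WithLp.coe_linearEquiv, WithLp.equiv_symm_apply, PiLp.toLp_apply] using h1
      have hxi : x i = 1 := by
        have := hcoord (Fin.last m)
        simp only [hf, hbfun, Fin.lastCases_last] at this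
        rw [← this]
        simp [mul_ite, Finset.sum_ite_eq' univ i x]
      have hAx : A *ᵥ x = 0 := by
        funext k
        have := hcoord k.castSucc
        simp only [hf, hbfun, Fin.lastCases_castSucc] at this
        simpa [Matrix.mulVec, dotProduct, mul_comm] using this
      have := h x hAx hx
      rw [this] at hxi
      exact zero_ne_one hxi
    obtain ⟨y', hpos, hneg⟩ := farkas_sep V b hfar
    set y : Fin m → ℝ := fun k => y' k.castSucc with hy
    set t : ℝ := y' (Fin.last m) with htdef
    have hip : ∀ j, ⟪V j, y'⟫ = (Aᵀ *ᵥ y) j + (if j = i then 1 else 0) * t := by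
      intro j
      rw [PiLp.inner_apply]
      simp only [RCLike.inner_apply, conj_trivial, hV, WithLp.equiv_symm_apply, PiLp.toLp_apply]
      rw [Fin.sum_univ_castSucc]
      simp only [hf, Fin.lastCases_castSucc, Fin.lastCases_last]
      rw [← htdef]
      congr 1
      · exact Finset.sum_congr rfl fun k _ => mul_comm _ _
      · exact mul_comm _ _
    have hts : ⟪y', b⟫ = t := by
      rw [real_inner_comm, PiLp.inner_apply]
      simp only [RCLike.inner_apply, conj_trivial, hb, WithLp.equiv_symm_apply, PiLp.toLp_apply]
      rw [Fin.sum_univ_castSucc]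
      simp [hbfun]
      exact htdef.symm
    rw [hts] at hneg
    refine ⟨y, fun j => ?_, ?_⟩
    · have := hpos j
      rw [hip j] at this
      by_cases hj : j = i
      · subst hj; rw [if_pos rfl, one_mul] at this; linarith
      · simpa [hj] using this
    · have := hpos i
      rw [hip i] at this
      rw [if_pos rfl, one_mul] at this
      linarith
end

section
/- Let A be an m×n real matrix. Define B = {i | ∃x: Ax = 0, x ≥ 0, xᵢ > 0} and N = {i | ∃y: Aᵀy ≥ 0, aᵢᵀy > 0}. Then B and N are disjoint and B ∪ N = {1,…,n}; moreover there exist x with Ax = 0, x ≥ 0, xᵢ > 0 for all i ∈ B, and y with Aᵀy ≥ 0, aᵢᵀy > 0 for all i ∈ N. -/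
open Matrix

open Finset in
/-- The finitely generated cone over `v` is closed. -/
lemma gt_cone_isClosed {E : Type*} [NormedAddCommGroup E] [NormedSpace ℝ E] [T2Space E] :
    ∀ (k : ℕ) (v : Fin k → E),
    IsClosed {x : E | ∃ c : Fin k → ℝ, (∀ j, 0 ≤ c j) ∧ ∑ j, c j • v j = x} := by
  intro k
  induction k with
  | zero =>
    intro v
    convert isClosed_singleton (x := (0 : E)) using 1
    ext x
    simp [eq_comm]
  | succ k ih =>
    intro v
    by_cases hLI : LinearIndependent ℝ v
    · let L : (Fin (k + 1) → ℝ) →ₗ[ℝ] E :=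
        { toFun := fun c => ∑ j, c j • v j
          map_add' := by intro a b; simp [add_smul, Finset.sum_add_distrib]
          map_smul' := by intro a b; simp [smul_smul, Finset.smul_sum] }
      have hker : LinearMap.ker L = ⊥ := by
        rw [LinearMap.ker_eq_bot']
        intro c hc
        have := (Fintype.linearIndependent_iff.mp hLI) c hc
        funext j; exact this j
      have hemb := L.isClosedEmbedding_of_injective hker
      have : {x : E | ∃ c : Fin (k+1) → ℝ, (∀ j, 0 ≤ c j) ∧ ∑ j, c j • v j = x}
          = L '' {c | ∀ j, 0 ≤ c j} := by
        ext x
        simp only [Set.mem_setOf_eq, Set.mem_image]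
        constructor
        · rintro ⟨c, h1, h2⟩; exact ⟨c, h1, h2⟩
        · rintro ⟨c, h1, h2⟩; exact ⟨c, h1, h2⟩
      rw [this]
      have horth : {c : Fin (k+1) → ℝ | ∀ j, 0 ≤ c j} = ⋂ j, {c | 0 ≤ c j} := by
        ext c; simp
      refine hemb.isClosedMap _ ?_
      rw [horth]
      exact isClosed_iInter fun j => isClosed_le continuous_const (continuous_apply j)
    · obtain ⟨g, hg0, i0, hgi0⟩ := Fintype.not_linearIndependent_iff.mp hLI
      -- WLOG some coordinate of g is positive
      obtain ⟨g, hg0, i0, hgi0⟩ : ∃ g : Fin (k+1) → ℝ,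
          (∑ i, g i • v i = 0) ∧ ∃ i, 0 < g i := by
        rcases lt_trichotomy (g i0) 0 with h | h | h
        · exact ⟨-g, by simpa using hg0, i0, by simpa using h⟩
        · exact absurd h hgi0
        · exact ⟨g, hg0, i0, h⟩
      have key : {x : E | ∃ c : Fin (k+1) → ℝ, (∀ j, 0 ≤ c j) ∧ ∑ j, c j • v j = x}
          = ⋃ j : Fin (k+1), {x : E | ∃ c : Fin k → ℝ, (∀ r, 0 ≤ c r) ∧
              ∑ r, c r • (v ∘ j.succAbove) r = x} := by
        ext x
        simp only [Set.mem_setOf_eq, Set.mem_iUnion]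
        constructor
        · rintro ⟨c, hc, hcx⟩
          have hP : (univ.filter fun j => 0 < g j).Nonempty := ⟨i0, by simpa using hgi0⟩
          obtain ⟨j0, hj0mem, hj0min⟩ :=
            Finset.exists_min_image (univ.filter fun j => 0 < g j) (fun j => c j / g j) hP
          have hgj0 : 0 < g j0 := by simpa using hj0mem
          set t : ℝ := c j0 / g j0 with ht
          have ht0 : 0 ≤ t := div_nonneg (hc j0) hgj0.le
          have hc' : ∀ j, 0 ≤ c j - t * g j := by
            intro j
            by_cases hgj : 0 < g j
            · have := hj0min j (by simpa using hgj)
              have : t * g j ≤ (c j / g j) * g j := by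
                exact mul_le_mul_of_nonneg_right this hgj.le
              rw [div_mul_cancel₀ _ hgj.ne'] at this
              linarith
            · push_neg at hgj
              nlinarith [hc j, mul_nonpos_of_nonneg_of_nonpos ht0 hgj]
          have hj00 : c j0 - t * g j0 = 0 := by
            rw [ht, div_mul_cancel₀ _ hgj0.ne', sub_self]
          refine ⟨j0, fun r => c (j0.succAbove r) - t * g (j0.succAbove r),
            fun r => hc' _, ?_⟩
          have hsum : ∑ j, (c j - t * g j) • v j = x := by
            have : ∑ j, (c j - t * g j) • v j = ∑ j, c j • v j - t • ∑ j, g j • v j := by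
              rw [Finset.smul_sum, ← Finset.sum_sub_distrib]
              congr 1; funext j; rw [sub_smul, smul_smul]
            rw [this, hg0, smul_zero, sub_zero, hcx]
          calc ∑ r, (c (j0.succAbove r) - t * g (j0.succAbove r)) • (v ∘ j0.succAbove) r
              = ∑ j, (c j - t * g j) • v j := by
                rw [Fin.sum_univ_succAbove (fun j => (c j - t * g j) • v j) j0, hj00,
                  zero_smul, zero_add]
                rfl
            _ = x := hsum
        · rintro ⟨j, c, hc, hcx⟩
          refine ⟨Fin.insertNth j 0 c, ?_, ?_⟩
          · refine Fin.succAboveCases j ?_ ?_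
            · simp
            · intro r; simpa using hc r
          · rw [Fin.sum_univ_succAbove _ j]
            simp only [Fin.insertNth_apply_same, Fin.insertNth_apply_succAbove, zero_smul,
              zero_add]
            exact hcx
      rw [key]
      exact isClosed_iUnion_of_finite fun j => ih (v ∘ j.succAbove)

/-- Farkas lemma. -/
lemma gt_farkas {d k : ℕ} (v : Fin k → EuclideanSpace ℝ (Fin d)) (b : EuclideanSpace ℝ (Fin d)) :
    (∃ c : Fin k → ℝ, (∀ j, 0 ≤ c j) ∧ ∑ j, c j • v j = b) ∨
    (∃ y : EuclideanSpace ℝ (Fin d), (∀ j, 0 ≤ (inner ℝ (v j) y : ℝ)) ∧ (inner ℝ y b : ℝ) < 0) := by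
  by_cases hb : ∃ c : Fin k → ℝ, (∀ j, 0 ≤ c j) ∧ ∑ j, c j • v j = b
  · exact Or.inl hb
  · right
    let K : ConvexCone ℝ (EuclideanSpace ℝ (Fin d)) :=
    { carrier := {x | ∃ c : Fin k → ℝ, (∀ j, 0 ≤ c j) ∧ ∑ j, c j • v j = x}
      smul_mem' := by
        rintro a ha x ⟨c, hc, hcx⟩
        exact ⟨fun j => a * c j, fun j => mul_nonneg ha.le (hc j), by
          simp only [← hcx, Finset.smul_sum, smul_smul]⟩
      add_mem' := by
        rintro x ⟨c, hc, hcx⟩ y ⟨c', hc', hcy⟩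
        exact ⟨c + c', fun j => add_nonneg (hc j) (hc' j), by
          simp [add_smul, Finset.sum_add_distrib, hcx, hcy]⟩ }
    have hne : (K : Set (EuclideanSpace ℝ (Fin d))).Nonempty :=
      ⟨0, 0, fun j => le_refl 0, by simp⟩
    have hcl : IsClosed (K : Set (EuclideanSpace ℝ (Fin d))) := gt_cone_isClosed k v
    let C : ProperCone ℝ (EuclideanSpace ℝ (Fin d)) :=
      { carrier := K
        add_mem' := fun ha hb => K.add_mem ha hb
        zero_mem' := ⟨0, fun _ => le_refl 0, by simp⟩
        smul_mem' := by
          rintro a x ⟨c, hc, hcx⟩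
          exact ⟨fun j => (a : ℝ) * c j, fun j => mul_nonneg a.2 (hc j), by
            rw [← hcx, Finset.smul_sum]
            exact Finset.sum_congr rfl fun j _ => (smul_smul (a : ℝ) (c j) (v j)).symm⟩
        isClosed' := hcl }
    obtain ⟨y, hy1, hy2⟩ := ProperCone.hyperplane_separation' (x₀ := b) C hb
    refine ⟨y, fun j => ?_, by rw [real_inner_comm]; exact hy2⟩
    apply hy1
    refine ⟨Pi.single j 1, fun r => ?_, ?_⟩
    · rw [Pi.single_apply]; split <;> norm_num
    · simp [Pi.single_apply, ite_smul]

lemma euc_sum_apply {d k : ℕ} (f : Fin k → EuclideanSpace ℝ (Fin d)) (p : Fin d) :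
    (∑ j, f j) p = ∑ j, f j p :=
  by rw [WithLp.ofLp_sum, Finset.sum_apply]

lemma mulVec_sum_apply {m n k : ℕ} (M : Matrix (Fin m) (Fin n) ℝ) (f : Fin k → Fin n → ℝ)
    (r : Fin m) : (M *ᵥ ∑ i, f i) r = ∑ i, (M *ᵥ f i) r := by
  simp [Matrix.mulVec, dotProduct, Finset.sum_apply, Finset.mul_sum]
  rw [Finset.sum_comm]

/-- The per-index Goldman–Tucker alternative. -/
lemma gt_key {m n : ℕ} (A : Matrix (Fin m) (Fin n) ℝ) (i : Fin n) :
    (∃ x : Fin n → ℝ, A *ᵥ x = 0 ∧ (∀ j, 0 ≤ x j) ∧ 0 < x i) ∨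
    (∃ y : Fin m → ℝ, (∀ j, 0 ≤ (Aᵀ *ᵥ y) j) ∧ 0 < (Aᵀ *ᵥ y) i) := by
  classical
  set v : Fin n → EuclideanSpace ℝ (Fin (m + 1)) :=
    fun j => WithLp.toLp 2 (Fin.snoc (fun r => A r j) (if j = i then 1 else 0)) with hv
  set b : EuclideanSpace ℝ (Fin (m + 1)) := WithLp.toLp 2 (Fin.snoc (fun _ => 0) 1) with hb
  rcases gt_farkas v b with ⟨c, hc, hcb⟩ | ⟨y', hy1, hy2⟩
  · left
    refine ⟨c, ?_, hc, ?_⟩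
    · funext r
      have h := congrArg (fun z : EuclideanSpace ℝ (Fin (m + 1)) => z (Fin.castSucc r)) hcb
      rw [euc_sum_apply] at h
      simp only [hv, hb, PiLp.smul_apply, PiLp.toLp_apply, smul_eq_mul, Fin.snoc_castSucc] at h
      simp only [Pi.zero_apply, Matrix.mulVec, dotProduct]
      rw [← h]
      exact Finset.sum_congr rfl fun j _ => mul_comm _ _
    · have h := congrArg (fun z : EuclideanSpace ℝ (Fin (m + 1)) => z (Fin.last m)) hcb
      rw [euc_sum_apply] at h
      simp only [hv, hb, PiLp.smul_apply, PiLp.toLp_apply, smul_eq_mul, Fin.snoc_last, mul_ite, mul_one,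
        mul_zero] at h
      rw [Finset.sum_ite_eq' Finset.univ i c] at h
      simp only [Finset.mem_univ, if_true] at h
      rw [h]; norm_num
  · right
    set y : Fin m → ℝ := fun r => y' (Fin.castSucc r) with hy
    set t : ℝ := y' (Fin.last m) with htdef
    have hinner : ∀ j, (inner ℝ (v j) y' : ℝ) =
        (Aᵀ *ᵥ y) j + (if j = i then 1 else 0) * t := by
      intro j
      rw [PiLp.inner_apply]
      simp only [RCLike.inner_apply, starRingEnd_apply, star_trivial]
      rw [Fin.sum_univ_castSucc]
      simp only [hv, Fin.snoc_castSucc, Fin.snoc_last]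
      congr 1
      · exact Finset.sum_congr rfl fun r _ => mul_comm _ _
      · rw [mul_comm]
    have hbt : (inner ℝ y' b : ℝ) = t := by
      rw [real_inner_comm, PiLp.inner_apply]
      simp only [RCLike.inner_apply, starRingEnd_apply, star_trivial]
      rw [Fin.sum_univ_castSucc]
      simp [hb, Fin.snoc_castSucc, Fin.snoc_last]
      rfl
    rw [hbt] at hy2
    refine ⟨y, fun j => ?_, ?_⟩
    · by_cases hji : j = i
      · have := hy1 j
        rw [hinner j, if_pos hji] at this
        nlinarith
      · have := hy1 j
        rw [hinner j, if_neg hji] at this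
        simpa using this
    · have := hy1 i
      rw [hinner i, if_pos rfl] at this
      nlinarith

/-- Goldman–Tucker theorem: the index sets `B` and `N` partition `{1,…,n}` and
there are strictly complementary solutions realizing them. -/
theorem goldman_tucker {m n : ℕ} (A : Matrix (Fin m) (Fin n) ℝ) :
    let B : Set (Fin n) :=
      {i | ∃ x : Fin n → ℝ, A *ᵥ x = 0 ∧ (∀ j, 0 ≤ x j) ∧ 0 < x i}
    let N : Set (Fin n) :=
      {i | ∃ y : Fin m → ℝ, (∀ j, 0 ≤ (Aᵀ *ᵥ y) j) ∧ 0 < (Aᵀ *ᵥ y) i}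
    Disjoint B N ∧ B ∪ N = Set.univ ∧
      (∃ x : Fin n → ℝ, A *ᵥ x = 0 ∧ (∀ j, 0 ≤ x j) ∧ ∀ i ∈ B, 0 < x i) ∧
      (∃ y : Fin m → ℝ, (∀ j, 0 ≤ (Aᵀ *ᵥ y) j) ∧ ∀ i ∈ N, 0 < (Aᵀ *ᵥ y) i) := by
  classical
  intro B N
  have hdisj : Disjoint B N := by
    rw [Set.disjoint_left]
    rintro i ⟨x, hx0, hxn, hxi⟩ ⟨y, hyn, hyi⟩
    have h1 : y ⬝ᵥ (A *ᵥ x) = (Aᵀ *ᵥ y) ⬝ᵥ x := by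
      rw [Matrix.dotProduct_mulVec, Matrix.mulVec_transpose]
    rw [hx0, dotProduct_zero] at h1
    have h2 : 0 < (Aᵀ *ᵥ y) ⬝ᵥ x := by
      rw [dotProduct]
      exact Finset.sum_pos' (fun j _ => mul_nonneg (hyn j) (hxn j))
        ⟨i, Finset.mem_univ i, mul_pos hyi hxi⟩
    rw [← h1] at h2
    exact lt_irrefl 0 h2
  refine ⟨hdisj, ?_, ?_, ?_⟩
  · ext i
    simp only [Set.mem_union, Set.mem_univ, iff_true]
    rcases gt_key A i with h | h
    · exact Or.inl h
    · exact Or.inr h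
  · -- combined x
    have hch : ∀ i : Fin n, ∃ x : Fin n → ℝ,
        A *ᵥ x = 0 ∧ (∀ j, 0 ≤ x j) ∧ (i ∈ B → 0 < x i) := by
      intro i
      by_cases hi : i ∈ B
      · obtain ⟨x, h1, h2, h3⟩ := hi
        exact ⟨x, h1, h2, fun _ => h3⟩
      · exact ⟨0, by simp, fun j => le_refl 0, fun h => absurd h hi⟩
    choose xs h1 h2 h3 using hch
    refine ⟨∑ i, xs i, ?_, ?_, ?_⟩
    · funext r
      rw [mulVec_sum_apply]
      simp [h1]
    · intro j
      rw [Finset.sum_apply]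
      exact Finset.sum_nonneg fun i _ => h2 i j
    · intro i hi
      rw [Finset.sum_apply]
      exact Finset.sum_pos' (fun k _ => h2 k i) ⟨i, Finset.mem_univ i, h3 i hi⟩
  · -- combined y
    have hch : ∀ i : Fin n, ∃ y : Fin m → ℝ,
        (∀ j, 0 ≤ (Aᵀ *ᵥ y) j) ∧ (i ∈ N → 0 < (Aᵀ *ᵥ y) i) := by
      intro i
      by_cases hi : i ∈ N
      · obtain ⟨y, h1, h2⟩ := hi
        exact ⟨y, h1, fun _ => h2⟩
      · exact ⟨0, by simp, fun h => absurd h hi⟩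
    choose ys h1 h2 using hch
    refine ⟨∑ i, ys i, ?_, ?_⟩
    · intro j
      rw [mulVec_sum_apply]
      exact Finset.sum_nonneg fun i _ => h1 i j
    · intro i hi
      rw [mulVec_sum_apply]
      exact Finset.sum_pos' (fun k _ => h1 k i) ⟨i, Finset.mem_univ i, h2 i hi⟩
end

section
/- Let A be an m×n real matrix with columns a₁,…,aₙ. For every index i, there exists x with Ax = 0, x ≥ 0, and xᵢ > 0 if and only if aᵢ belongs to the lineality space of the cone A(ℝⁿ₊) = {Ax | x ≥ 0}. -/
open Matrix

/-- Geometric characterization of `B`: index `i` admits a primal solution with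
`xᵢ > 0` iff the column `aᵢ` lies in the lineality space of the cone `A(ℝⁿ₊)`. -/
theorem primal_pos_iff_col_in_lineality {m n : ℕ}
    (A : Matrix (Fin m) (Fin n) ℝ) (i : Fin n) :
    let C : Set (Fin m → ℝ) := {z | ∃ x : Fin n → ℝ, (∀ j, 0 ≤ x j) ∧ z = A *ᵥ x}
    (∃ x : Fin n → ℝ, A *ᵥ x = 0 ∧ (∀ j, 0 ≤ x j) ∧ 0 < x i) ↔
      (fun k => A k i) ∈ {v | v ∈ C ∧ -v ∈ C} := by
  intro C
  have hcol : (fun k => A k i) = A *ᵥ Pi.single i 1 := by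
    ext k
    simp [Matrix.mulVec_single]
  constructor
  · rintro ⟨x, hAx, hx, hxi⟩
    refine ⟨⟨Pi.single i 1, ?_, hcol⟩, ⟨(x i)⁻¹ • x - Pi.single i 1, ?_, ?_⟩⟩
    · intro j
      rcases eq_or_ne j i with rfl | h
      · simp
      · simp [Pi.single_eq_of_ne h]
    · intro j
      rcases eq_or_ne j i with rfl | h
      · simp [Pi.single_eq_same, inv_mul_cancel₀ hxi.ne']
      · simpa [Pi.single_eq_of_ne h] using
          mul_nonneg (inv_nonneg.2 hxi.le) (hx j)
    · rw [Matrix.mulVec_sub, Matrix.mulVec_smul, hAx, ← hcol]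
      simp
  · rintro ⟨_, ⟨y, hy, hAy⟩⟩
    refine ⟨y + Pi.single i 1, ?_, ?_, ?_⟩
    · rw [Matrix.mulVec_add, ← hAy, ← hcol]
      simp
    · intro j
      rcases eq_or_ne j i with rfl | h
      · simp; linarith [hy j]
      · simpa [Pi.single_eq_of_ne h] using hy j
    · simp; linarith [hy i]
end

section
/- Let A be an m×n real matrix with columns a₁,…,aₙ. For every index i, there exists y ∈ ℝᵐ with Aᵀy ≥ 0 and aᵢᵀy > 0 if and only if aᵢ does not belong to the lineality space of the cone A(ℝⁿ₊). -/
open Matrix Finset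

variable {E : Type*} [NormedAddCommGroup E] [NormedSpace ℝ E]

lemma isClosed_finGenCone : ∀ (k : ℕ) {ι : Type} [Fintype ι] (a : ι → E),
    Fintype.card ι = k →
    IsClosed {z : E | ∃ c : ι → ℝ, (∀ j, 0 ≤ c j) ∧ z = ∑ j, c j • a j} := by
  intro k
  induction k using Nat.strong_induction_on with
  | _ k IH =>
  intro ι _ a hcard
  classical
  by_cases hli : LinearIndependent ℝ a
  · -- closed embedding case
    let f : (ι → ℝ) →ₗ[ℝ] E :=
      { toFun := fun c => ∑ j, c j • a j
        map_add' := by intro x y; simp [add_smul, Finset.sum_add_distrib]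
        map_smul' := by intro r x; simp [smul_smul, Finset.smul_sum] }
    have hker : LinearMap.ker f = ⊥ := by
      rw [LinearMap.ker_eq_bot']
      intro c hc
      have := Fintype.linearIndependent_iff.mp hli c hc
      funext j; exact this j
    have hemb := LinearMap.isClosedEmbedding_of_injective hker
    have hset : {z : E | ∃ c : ι → ℝ, (∀ j, 0 ≤ c j) ∧ z = ∑ j, c j • a j}
        = f '' {c | ∀ j, 0 ≤ c j} := by
      ext z
      constructor
      · rintro ⟨c, hc, rfl⟩; exact ⟨c, hc, rfl⟩
      · rintro ⟨c, hc, rfl⟩; exact ⟨c, hc, rfl⟩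
    have horth : IsClosed {c : ι → ℝ | ∀ j, 0 ≤ c j} := by
      have : {c : ι → ℝ | ∀ j, 0 ≤ c j} = ⋂ j, {c : ι → ℝ | 0 ≤ c j} := by
        ext; simp [Set.mem_iInter]
      rw [this]
      exact isClosed_iInter fun j => isClosed_le continuous_const (continuous_apply j)
    rw [hset]
    exact hemb.isClosedMap _ horth
  · -- dependent case: delete one generator
    obtain ⟨g, hg0, j₁, hj₁⟩ := Fintype.not_linearIndependent_iff.mp hli
    obtain ⟨d, hd0, jd, hjd⟩ :
        ∃ d : ι → ℝ, ∑ j, d j • a j = 0 ∧ ∃ j, 0 < d j := by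
      by_cases h : ∃ j, 0 < g j
      · exact ⟨g, hg0, h⟩
      · push_neg at h
        refine ⟨-g, by simp [hg0], j₁, ?_⟩
        simpa using lt_of_le_of_ne (h j₁) hj₁
    have hU : {z : E | ∃ c : ι → ℝ, (∀ j, 0 ≤ c j) ∧ z = ∑ j, c j • a j}
        = ⋃ j₀ : ι, {z : E | ∃ c : {l // l ≠ j₀} → ℝ, (∀ j, 0 ≤ c j) ∧
            z = ∑ j, c j • a j.1} := by
      ext z
      simp only [Set.mem_iUnion, Set.mem_setOf_eq]
      constructor
      · rintro ⟨c, hc, rfl⟩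
        have hT : (univ.filter fun j => 0 < d j).Nonempty := ⟨jd, by simp [hjd]⟩
        obtain ⟨j₀, hj₀mem, hj₀min⟩ :=
          Finset.exists_min_image _ (fun j => c j / d j) hT
        simp only [mem_filter, mem_univ, true_and] at hj₀mem
        set t := c j₀ / d j₀ with ht
        have ht0 : 0 ≤ t := div_nonneg (hc j₀) hj₀mem.le
        have hc' : ∀ j, 0 ≤ c j - t * d j := by
          intro j
          rcases le_or_gt (d j) 0 with h | h
          · have : t * d j ≤ 0 := mul_nonpos_of_nonneg_of_nonpos ht0 h
            linarith [hc j]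
          · have h2 := hj₀min j (by simp [h])
            rw [div_le_div_iff₀ hj₀mem h] at h2
            have h3 : t * d j ≤ c j := by
              rw [ht, div_mul_eq_mul_div, div_le_iff₀ hj₀mem]
              linarith
            linarith
        have hz : ∑ j, (c j - t * d j) • a j = ∑ j, c j • a j := by
          have he : ∀ j : ι, (c j - t * d j) • a j = c j • a j - t • (d j • a j) := by
            intro j; rw [sub_smul, smul_smul]
          simp only [he]
          rw [Finset.sum_sub_distrib, ← Finset.smul_sum, hd0, smul_zero, sub_zero]
        have hj₀zero : c j₀ - t * d j₀ = 0 := by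
          rw [ht, div_mul_cancel₀ _ (ne_of_gt hj₀mem), sub_self]
        refine ⟨j₀, fun j => c j.1 - t * d j.1, fun j => hc' j.1, ?_⟩
        rw [← hz,
          ← Finset.sum_subtype (univ.erase j₀)
            (fun l => by simp [Finset.mem_erase] : ∀ l, l ∈ univ.erase j₀ ↔ l ≠ j₀)
            (fun l => (c l - t * d l) • a l),
          Finset.sum_erase _ (by rw [hj₀zero, zero_smul])]
      · rintro ⟨j₀, c, hc, hcz⟩
        refine ⟨fun l => if h : l = j₀ then 0 else c ⟨l, h⟩, fun l => by
          by_cases h : l = j₀ <;> simp [h, hc], ?_⟩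
        rw [hcz,
          ← Finset.sum_erase (a := j₀) univ
            (f := fun l => (if h : l = j₀ then 0 else c ⟨l, h⟩) • a l) (by simp),
          Finset.sum_subtype (univ.erase j₀)
            (fun l => by simp [Finset.mem_erase] : ∀ l, l ∈ univ.erase j₀ ↔ l ≠ j₀)
            (fun l => (if h : l = j₀ then 0 else c ⟨l, h⟩) • a l)]
        apply Finset.sum_congr rfl
        intro x _
        simp [x.2]
    rw [hU]
    apply isClosed_iUnion_of_finite
    intro j₀
    have hlt : Fintype.card {l // l ≠ j₀} < k := by
      rw [← hcard]
      exact Fintype.card_subtype_lt (x := j₀) (by simp)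
    exact IH _ hlt _ rfl

open scoped InnerProductSpace in
lemma farkas_cone {m n : ℕ} (a : Fin n → EuclideanSpace ℝ (Fin m))
    (b : EuclideanSpace ℝ (Fin m))
    (h : ∀ y : EuclideanSpace ℝ (Fin m), (∀ j, 0 ≤ ⟪a j, y⟫_ℝ) → 0 ≤ ⟪b, y⟫_ℝ) :
    ∃ c : Fin n → ℝ, (∀ j, 0 ≤ c j) ∧ b = ∑ j, c j • a j := by
  classical
  by_contra hb
  let K : ConvexCone ℝ (EuclideanSpace ℝ (Fin m)) :=
    { carrier := {z | ∃ c : Fin n → ℝ, (∀ j, 0 ≤ c j) ∧ z = ∑ j, c j • a j}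
      smul_mem' := by
        rintro r hr z ⟨c, hc, rfl⟩
        exact ⟨fun j => r * c j, fun j => mul_nonneg hr.le (hc j), by
          simp [Finset.smul_sum, smul_smul]⟩
      add_mem' := by
        rintro z ⟨c, hc, rfl⟩ w ⟨e, he, rfl⟩
        exact ⟨fun j => c j + e j, fun j => add_nonneg (hc j) (he j), by
          simp [add_smul, Finset.sum_add_distrib]⟩ }
  have hne : (K : Set (EuclideanSpace ℝ (Fin m))).Nonempty :=
    ⟨0, ⟨0, fun j => le_refl 0, by simp⟩⟩
  have hcl : IsClosed (K : Set (EuclideanSpace ℝ (Fin m))) :=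
    isClosed_finGenCone (Fintype.card (Fin n)) a rfl
  have hbK : b ∉ K := hb
  obtain ⟨y, hy1, hy2⟩ :=
    ProperCone.hyperplane_separation' (x₀ := b)
      ({ carrier := (K : Set (EuclideanSpace ℝ (Fin m)))
         add_mem' := fun hx hy => K.add_mem hx hy
         zero_mem' := ⟨0, fun _ => le_rfl, by simp⟩
         smul_mem' := by
           rintro c z ⟨e, he, rfl⟩
           exact ⟨fun j => (c : ℝ) * e j, fun j => mul_nonneg c.2 (he j), by
             simp only [Finset.smul_sum]
             exact Finset.sum_congr rfl fun x _ => by rw [mul_smul]; rfl⟩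
         isClosed' := hcl } : ProperCone ℝ (EuclideanSpace ℝ (Fin m))) hbK
  have haK : ∀ j, a j ∈ K := by
    intro j
    refine ⟨Pi.single j 1, fun l => ?_, ?_⟩
    · rcases eq_or_ne l j with hl | hl
      · subst hl; simp
      · simp [Pi.single_eq_of_ne hl]
    · simp [Pi.single_apply, ite_smul]
  have h0 : 0 ≤ ⟪b, y⟫_ℝ := h y fun j => hy1 _ (haK j)
  linarith

open scoped InnerProductSpace in
lemma inner_euc {m : ℕ} (x y : EuclideanSpace ℝ (Fin m)) :
    ⟪x, y⟫_ℝ = ∑ k, x k * y k := by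
  simp [PiLp.inner_apply, RCLike.inner_apply, conj_trivial]
  exact Finset.sum_congr rfl fun _ _ => mul_comm _ _

/-- Geometric characterization of `N`: index `i` admits a dual solution with
`aᵢᵀ y > 0` iff the column `aᵢ` does not lie in the lineality space of `A(ℝⁿ₊)`. -/
theorem dual_pos_iff_col_not_in_lineality {m n : ℕ}
    (A : Matrix (Fin m) (Fin n) ℝ) (i : Fin n) :
    let C : Set (Fin m → ℝ) := {z | ∃ x : Fin n → ℝ, (∀ j, 0 ≤ x j) ∧ z = A *ᵥ x}
    (∃ y : Fin m → ℝ, (∀ j, 0 ≤ (Aᵀ *ᵥ y) j) ∧ 0 < (Aᵀ *ᵥ y) i) ↔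
      (fun k => A k i) ∉ {v | v ∈ C ∧ -v ∈ C} := by
  intro C
  have hAty : ∀ (y : Fin m → ℝ) (j : Fin n), (Aᵀ *ᵥ y) j = ∑ k, A k j * y k := by
    intro y j
    simp [Matrix.mulVec, dotProduct, Matrix.transpose_apply, mul_comm]
  have hmv : ∀ x : Fin n → ℝ, A *ᵥ x = ∑ j, x j • (fun k => A k j) := by
    intro x
    funext k
    simp [Matrix.mulVec, dotProduct, Finset.sum_apply, mul_comm]
  constructor
  · rintro ⟨y, hy, hyi⟩ ⟨hv, hnv⟩
    obtain ⟨x, hx, hxe⟩ := hnv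
    have h1 : 0 ≤ ∑ j, (Aᵀ *ᵥ y) j * x j :=
      Finset.sum_nonneg fun j _ => mul_nonneg (hy j) (hx j)
    have h2 : y ⬝ᵥ (A *ᵥ x) = ∑ j, (Aᵀ *ᵥ y) j * x j := by
      rw [Matrix.dotProduct_mulVec, ← Matrix.mulVec_transpose]
      rfl
    have h3 : y ⬝ᵥ (-(fun k => A k i) : Fin m → ℝ) < 0 := by
      have h4 : y ⬝ᵥ (fun k => A k i) = (Aᵀ *ᵥ y) i := by
        rw [hAty]
        simp [dotProduct, mul_comm]
      rw [dotProduct_neg, h4]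
      linarith
    rw [hxe, h2] at h3
    linarith
  · intro hnotin
    by_contra hno
    push_neg at hno
    apply hnotin
    constructor
    · refine ⟨Pi.single i 1, fun l => ?_, ?_⟩
      · rcases eq_or_ne l i with hl | hl
        · subst hl; simp
        · simp [Pi.single_eq_of_ne hl]
      · funext k
        rw [Matrix.mulVec_single]
        simp
    · -- use Farkas
      have key := farkas_cone (m := m) (n := n) (fun j => WithLp.toLp 2 (fun k => A k j))
        (WithLp.toLp 2 (-(fun k => A k i))) ?_
      · obtain ⟨c, hc, hce⟩ := key
        exact ⟨c, hc, by rw [hmv c]; simpa using congrArg WithLp.ofLp hce⟩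
      · intro y hy
        have hy' : ∀ j, 0 ≤ (Aᵀ *ᵥ y) j := by
          intro j
          rw [hAty]
          have := hy j
          rwa [inner_euc] at this
        have := hno y hy'
        rw [inner_euc]
        have hsum : ∑ k, (-(fun k => A k i) : Fin m → ℝ) k * y k = -((Aᵀ *ᵥ y) i) := by
          rw [hAty]
          simp [Finset.sum_neg_distrib]
        rw [hsum]
        linarith
end

section
/- Let K = K₁ × ⋯ × K_r ⊆ ℝⁿ be a product of regular (closed, convex, pointed, full-dimensional) cones Kᵢ ⊆ ℝ^{nᵢ}, and let A = [A₁ ⋯ A_r] ∈ ℝ^{m×n} with blocks Aᵢ ∈ ℝ^{m×nᵢ}. For each i, the following are equivalent: (1) there exists x ∈ K with Ax = 0 and xᵢ ∈ int Kᵢ; (2) the relative interior of AᵢKᵢ intersects the lineality space of AK. -/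
open Matrix Set Filter Topology

/-- Membership in the intrinsic interior via neighborhoods within the affine span. -/
lemma memIntrinsic_iff {F : Type*} [NormedAddCommGroup F] [NormedSpace ℝ F]
    {S : Set F} {z : F} :
    z ∈ intrinsicInterior ℝ S ↔
      z ∈ affineSpan ℝ S ∧ S ∈ 𝓝[(affineSpan ℝ S : Set F)] z := by
  constructor
  · rintro ⟨y, hy, rfl⟩
    refine ⟨y.2, ?_⟩
    rw [← map_nhds_subtype_val y]
    exact mem_map.2 (mem_interior_iff_mem_nhds.1 hy)
  · rintro ⟨hz, hS⟩
    refine ⟨⟨z, hz⟩, ?_, rfl⟩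
    rw [mem_interior_iff_mem_nhds, ← mem_map, map_nhds_subtype_val]
    exact hS

/-- For a linear map `f` between finite-dimensional spaces and a convex set `C` with
nonempty interior, the relative interior of `f '' C` equals `f '' interior C`. -/
lemma intrinsicInterior_image_linearMap {E F : Type*} [NormedAddCommGroup E] [NormedSpace ℝ E]
    [NormedAddCommGroup F] [NormedSpace ℝ F] [FiniteDimensional ℝ E] [FiniteDimensional ℝ F]
    (f : E →ₗ[ℝ] F) {C : Set E} (hC : Convex ℝ C) (hne : (interior C).Nonempty) :
    intrinsicInterior ℝ (f '' C) = f '' interior C := by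
  obtain ⟨w₀, hw₀⟩ := hne
  apply Set.Subset.antisymm
  · intro z hz
    obtain ⟨hzspan, hS⟩ := memIntrinsic_iff.1 hz
    set z₀ : F := f w₀ with hz₀def
    have hz₀S : z₀ ∈ f '' C := ⟨w₀, interior_subset hw₀, rfl⟩
    have hz₀span : z₀ ∈ affineSpan ℝ (f '' C) := subset_affineSpan ℝ _ hz₀S
    set c : ℝ → F := fun t => t • (z - z₀) + z with hcdef
    have hmem : ∀ t : ℝ, c t ∈ (affineSpan ℝ (f '' C) : Set F) := fun t =>
      AffineSubspace.smul_vsub_vadd_mem _ t hzspan hz₀span hzspan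
    have hc : Continuous c := by continuity
    have htend : Tendsto c (𝓝 0) (𝓝[(affineSpan ℝ (f '' C) : Set F)] z) := by
      apply tendsto_nhdsWithin_of_tendsto_nhds_of_eventually_within
      · have := hc.tendsto 0
        simpa [hcdef] using this
      · exact Eventually.of_forall hmem
    have hev : c ⁻¹' (f '' C) ∈ 𝓝 (0 : ℝ) := htend hS
    obtain ⟨δ, hδ, hball⟩ := Metric.mem_nhds_iff.1 hev
    set ε : ℝ := δ / 2 with hεdef
    have hεpos : 0 < ε := half_pos hδ
    have hcε : c ε ∈ f '' C := by
      apply hball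
      rw [Metric.mem_ball, Real.dist_eq, sub_zero, abs_of_pos hεpos]
      linarith
    obtain ⟨u, huC, huf⟩ := hcε
    have h1ε : (0 : ℝ) < 1 + ε := by linarith
    set a : ℝ := ε / (1 + ε) with hadef
    set b : ℝ := 1 / (1 + ε) with hbdef
    have ha : 0 < a := div_pos hεpos h1ε
    have hb : 0 ≤ b := le_of_lt (div_pos one_pos h1ε)
    have hab : a + b = 1 := by
      rw [hadef, hbdef]; field_simp; ring
    have hv : a • w₀ + b • u ∈ interior C :=
      hC.combo_interior_self_mem_interior hw₀ huC ha hb hab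
    refine ⟨a • w₀ + b • u, hv, ?_⟩
    have h1εne : (1 : ℝ) + ε ≠ 0 := ne_of_gt h1ε
    rw [map_add, _root_.map_smul, _root_.map_smul, huf]
    rw [hcdef]
    simp only []
    rw [hadef, hbdef]
    match_scalars <;> (field_simp; try ring)
  · rintro _ ⟨w, hw, rfl⟩
    have hwC : w ∈ C := interior_subset hw
    have hspan : f w ∈ affineSpan ℝ (f '' C) := subset_affineSpan ℝ _ ⟨w, hwC, rfl⟩
    set W : Submodule ℝ F := LinearMap.range f with hWdef
    set g : E →L[ℝ] W := LinearMap.toContinuousLinearMap f.rangeRestrict with hgdef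
    have hgsurj : Function.Surjective g := f.surjective_rangeRestrict
    have hopen : IsOpenMap g := ContinuousLinearMap.isOpenMap g hgsurj
    have hU : IsOpen (g '' interior C) := hopen _ isOpen_interior
    obtain ⟨U, hUopen, hUeq⟩ := isOpen_induced_iff.1 hU
    have hsub : (affineSpan ℝ (f '' C) : Set F) ⊆ (W : Set F) := by
      have hle : affineSpan ℝ (f '' C) ≤ W.toAffineSubspace := by
        apply affineSpan_le.2
        rintro _ ⟨x, hx, rfl⟩
        exact Submodule.mem_toAffineSubspace.2 (LinearMap.mem_range_self f x)
      intro x hx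
      exact Submodule.mem_toAffineSubspace.1 (hle hx)
    refine memIntrinsic_iff.2 ⟨hspan, ?_⟩
    rw [mem_nhdsWithin]
    refine ⟨U, hUopen, ?_, ?_⟩
    · have : g w ∈ (Subtype.val ⁻¹' U : Set W) := by
        rw [hUeq]; exact ⟨w, hw, rfl⟩
      exact this
    · rintro u ⟨hu1, hu2⟩
      have huW : u ∈ W := hsub hu2
      have : (⟨u, huW⟩ : W) ∈ (Subtype.val ⁻¹' U : Set W) := hu1
      rw [hUeq] at this
      obtain ⟨v, hv, hveq⟩ := this
      refine ⟨v, interior_subset hv, ?_⟩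
      have : (g v : F) = u := congrArg Subtype.val hveq
      exact this

/-- Characterization of the set `B` for multifold conic systems:
`i ∈ B` iff `ri (AᵢKᵢ)` meets the lineality space of `AK`. -/
theorem multifold_B_iff {r m : ℕ} (n : Fin r → ℕ) (hn : ∀ i, 0 < n i)
    (K : ∀ i, Set (Fin (n i) → ℝ)) (A : ∀ i, Matrix (Fin m) (Fin (n i)) ℝ)
    (hK : ∀ i, IsClosed (K i) ∧ Convex ℝ (K i) ∧
      (∀ x ∈ K i, ∀ t : ℝ, 0 ≤ t → t • x ∈ K i) ∧
      (∀ x ∈ K i, -x ∈ K i → x = 0) ∧ (interior (K i)).Nonempty)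
    (i : Fin r) :
    let AK : Set (Fin m → ℝ) :=
      {z | ∃ x : ∀ j, Fin (n j) → ℝ, (∀ j, x j ∈ K j) ∧ z = ∑ j, (A j) *ᵥ x j}
    (∃ x : ∀ j, Fin (n j) → ℝ,
        (∀ j, x j ∈ K j) ∧ (∑ j, (A j) *ᵥ x j) = 0 ∧ x i ∈ interior (K i)) ↔
    (intrinsicInterior ℝ ((fun v => (A i) *ᵥ v) '' K i) ∩
      {z | z ∈ AK ∧ -z ∈ AK}).Nonempty := by
  intro AK
  -- basic facts
  have h0 : ∀ j, (0 : Fin (n j) → ℝ) ∈ K j := by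
    intro j
    obtain ⟨p, hp⟩ := (hK j).2.2.2.2
    have := (hK j).2.2.1 p (interior_subset hp) 0 le_rfl
    simpa using this
  have hsum2 : ∀ j, ∀ a ∈ K j, ∀ b ∈ K j, a + b ∈ K j := by
    intro j a ha b hb
    have hmid : (1/2 : ℝ) • a + (1/2 : ℝ) • b ∈ K j :=
      (hK j).2.1 ha hb (by norm_num) (by norm_num) (by norm_num)
    have := (hK j).2.2.1 _ hmid 2 (by norm_num)
    have heq : (2 : ℝ) • ((1/2 : ℝ) • a + (1/2 : ℝ) • b) = a + b := by
      rw [smul_add, smul_smul, smul_smul]; norm_num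
    rwa [heq] at this
  have haddint : ∀ u v : Fin (n i) → ℝ, u ∈ interior (K i) → v ∈ K i →
      u + v ∈ interior (K i) := by
    intro u v hu hv
    have hopen : IsOpen ((fun p => p + v) '' interior (K i)) :=
      (isOpenMap_add_right v) _ isOpen_interior
    have hsubset : ((fun p => p + v) '' interior (K i)) ⊆ K i := by
      rintro _ ⟨p, hp, rfl⟩
      exact hsum2 i p (interior_subset hp) v hv
    exact interior_maximal hsubset hopen ⟨u, hu, rfl⟩
  have hri : intrinsicInterior ℝ ((fun v => (A i) *ᵥ v) '' K i)
      = (fun v => (A i) *ᵥ v) '' interior (K i) := by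
    have : (fun v => (A i) *ᵥ v) '' K i = (Matrix.mulVecLin (A i)) '' K i := by
      rfl
    rw [this, intrinsicInterior_image_linearMap (Matrix.mulVecLin (A i)) (hK i).2.1
      (hK i).2.2.2.2]
    rfl
  constructor
  · rintro ⟨x, hx, hsum, hxi⟩
    refine ⟨(A i) *ᵥ x i, ?_, ?_, ?_⟩
    · rw [hri]; exact ⟨x i, hxi, rfl⟩
    · refine ⟨Function.update (fun j => (0 : Fin (n j) → ℝ)) i (x i), ?_, ?_⟩
      · intro j
        rcases eq_or_ne j i with rfl | hne
        · simpa using hx j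
        · rw [Function.update_of_ne hne]; exact h0 j
      · rw [Finset.sum_eq_single i]
        · rw [Function.update_self]
        · intro j _ hne
          rw [Function.update_of_ne hne]
          simp
        · intro h; exact absurd (Finset.mem_univ i) h
    · refine ⟨Function.update x i 0, ?_, ?_⟩
      · intro j
        rcases eq_or_ne j i with rfl | hne
        · simpa using h0 j
        · rw [Function.update_of_ne hne]; exact hx j
      · have hterm : ∀ j, (A j) *ᵥ (Function.update x i 0 j)
            = Function.update (fun j => (A j) *ᵥ x j) i 0 j := by
          intro j
          rcases eq_or_ne j i with rfl | hne
          · simp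
          · rw [Function.update_of_ne hne, Function.update_of_ne hne]
        calc -((A i) *ᵥ x i)
            = ∑ j, (A j) *ᵥ x j - (A i) *ᵥ x i := by rw [hsum]; ring_nf
          _ = ∑ j, Function.update (fun j => (A j) *ᵥ x j) i 0 j := by
              rw [Finset.sum_update_of_mem (Finset.mem_univ i),
                Finset.sum_eq_sum_sdiff_singleton_add (Finset.mem_univ i)
                (fun j => (A j) *ᵥ x j)]
              abel
          _ = ∑ j, (A j) *ᵥ (Function.update x i 0 j) := by
              exact Finset.sum_congr rfl fun j _ => (hterm j).symm
  · rintro ⟨z, hzri, hzAK, hznegAK⟩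
    rw [hri] at hzri
    obtain ⟨w, hw, rfl⟩ := hzri
    obtain ⟨y, hy, hyeq⟩ := hznegAK
    refine ⟨Function.update y i (w + y i), ?_, ?_, ?_⟩
    · intro j
      rcases eq_or_ne j i with rfl | hne
      · rw [Function.update_self]
        exact interior_subset (haddint w (y j) hw (hy j))
      · rw [Function.update_of_ne hne]; exact hy j
    · have hterm : ∀ j, (A j) *ᵥ (Function.update y i (w + y i) j)
          = Function.update (fun j => (A j) *ᵥ y j) i ((A i) *ᵥ w + (A i) *ᵥ y i) j := by
        intro j
        rcases eq_or_ne j i with rfl | hne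
        · simp [Matrix.mulVec_add]
        · rw [Function.update_of_ne hne, Function.update_of_ne hne]
      rw [Finset.sum_congr rfl fun j _ => hterm j]
      rw [Finset.sum_update_of_mem (Finset.mem_univ i)]
      have hsplit := Finset.sum_eq_sum_sdiff_singleton_add (Finset.mem_univ i)
        (fun j => (A j) *ᵥ y j)
      have : ∑ j ∈ Finset.univ \ {i}, (A j) *ᵥ y j
          = (∑ j, (A j) *ᵥ y j) - (A i) *ᵥ y i := by
        rw [hsplit]; abel
      rw [this, ← hyeq]
      abel
    · rw [Function.update_self]
      exact haddint w (y i) hw (hy i)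
end

section
/- Let K = K₁ × ⋯ × K_r be a product of regular closed convex cones Kᵢ ⊆ ℝ^{nᵢ}, and A = [A₁ ⋯ A_r] ∈ ℝ^{m×n}. For each i, the following are equivalent: (1) there exists y ∈ ℝᵐ with Aᵀy ∈ K₁* × ⋯ × K_r* and Aᵢᵀy ∈ int Kᵢ*; (2) Aᵢ(Kᵢ \ {0}) does not intersect the lineality space of the closure of AK. -/
open Matrix Set Filter

namespace MultifoldAux

variable {k : ℕ}

lemma continuous_dotProduct_right (s : Fin k → ℝ) :
    Continuous fun v : Fin k → ℝ => s ⬝ᵥ v := by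
  simp only [dotProduct]
  exact continuous_finset_sum _ fun i _ => continuous_const.mul (continuous_apply i)

lemma exists_dot_repr (f : (Fin k → ℝ) →ₗ[ℝ] ℝ) : ∃ y : Fin k → ℝ, ∀ x, f x = y ⬝ᵥ x := by
  refine ⟨fun i => f fun j => if i = j then 1 else 0, fun x => ?_⟩
  conv_lhs => rw [pi_eq_sum_univ x]
  rw [map_sum, dotProduct]
  refine Finset.sum_congr rfl fun i _ => ?_
  rw [_root_.map_smul, smul_eq_mul, mul_comm]

lemma dual_convex {D : Set (Fin k → ℝ)} :
    Convex ℝ {s : Fin k → ℝ | ∀ v ∈ D, 0 ≤ s ⬝ᵥ v} := by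
  intro y hy z hz a b ha hb _ v hv
  have h1 := hy v hv
  have h2 := hz v hv
  simp only [add_dotProduct, smul_dotProduct, smul_eq_mul]
  exact add_nonneg (mul_nonneg ha h1) (mul_nonneg hb h2)

lemma dotProduct_self_pos {v : Fin k → ℝ} (hv : v ≠ 0) : 0 < v ⬝ᵥ v := by
  rcases lt_or_eq_of_le (Finset.sum_nonneg fun i _ => mul_self_nonneg (v i)) with h | h
  · exact h
  · exact absurd (dotProduct_self_eq_zero.mp h.symm) hv

/-- Membership in the interior of a dual cone gives strict positivity on nonzero cone points. -/
lemma interior_dual_pos {K : Set (Fin k → ℝ)} {s : Fin k → ℝ}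
    (hs : s ∈ interior {s : Fin k → ℝ | ∀ v ∈ K, 0 ≤ s ⬝ᵥ v})
    {v : Fin k → ℝ} (hv : v ∈ K) (hv0 : v ≠ 0) : 0 < s ⬝ᵥ v := by
  have hnhds : {s : Fin k → ℝ | ∀ v ∈ K, 0 ≤ s ⬝ᵥ v} ∈ nhds s :=
    mem_interior_iff_mem_nhds.mp hs
  have hcont : Filter.Tendsto (fun t : ℝ => s - t • v) (nhds 0) (nhds s) := by
    have hc : Continuous fun t : ℝ => s - t • v := by continuity
    have h0 : s - (0:ℝ) • v = s := by simp
    simpa [h0] using hc.tendsto 0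
  have hev := hcont hnhds
  obtain ⟨ε, hε, hball⟩ := Metric.mem_nhds_iff.mp hev
  have hmem : (s - (ε/2) • v) ∈ {s : Fin k → ℝ | ∀ v ∈ K, 0 ≤ s ⬝ᵥ v} := by
    apply hball
    simp only [Metric.mem_ball, Real.dist_eq, sub_zero]
    rw [abs_of_pos (by positivity)]
    linarith
  have h1 := hmem v hv
  rw [sub_dotProduct, smul_dotProduct, smul_eq_mul] at h1
  nlinarith [dotProduct_self_pos hv0]

/-- Separation of a point from a closed convex cone. -/
lemma sep_closed_cone {C : Set (Fin k → ℝ)} (hcl : IsClosed C) (hco : Convex ℝ C)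
    (hcone : ∀ x ∈ C, ∀ t : ℝ, 0 ≤ t → t • x ∈ C) (h0 : (0 : Fin k → ℝ) ∈ C)
    {b : Fin k → ℝ} (hb : b ∉ C) :
    ∃ y : Fin k → ℝ, (∀ c ∈ C, 0 ≤ y ⬝ᵥ c) ∧ y ⬝ᵥ b < 0 := by
  obtain ⟨f, u, hfu, hub⟩ := geometric_hahn_banach_closed_point hco hcl hb
  have hu0 : 0 < u := by simpa using hfu 0 h0
  have hfle : ∀ c ∈ C, f c ≤ 0 := by
    intro c hc
    by_contra h
    push_neg at h
    have ht : (0:ℝ) ≤ (u + 1) / f c := by positivity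
    have := hfu _ (hcone c hc _ ht)
    rw [f.map_smul, smul_eq_mul, div_mul_cancel₀ _ (ne_of_gt h)] at this
    linarith
  obtain ⟨y₀, hy₀⟩ := exists_dot_repr (f : (Fin k → ℝ) →ₗ[ℝ] ℝ)
  refine ⟨-y₀, fun c hc => ?_, ?_⟩
  · rw [neg_dotProduct, ← hy₀]
    exact neg_nonneg.mpr (hfle c hc)
  · rw [neg_dotProduct, ← hy₀]
    exact neg_neg_iff_pos.mpr (lt_trans hu0 hub)

lemma mem_interior_of_pos_on_base {D : Set (Fin k → ℝ)}
    (hcone : ∀ x ∈ D, ∀ t : ℝ, 0 ≤ t → t • x ∈ D) {y : Fin k → ℝ} {ε : ℝ} (hε : 0 < ε)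
    (hbase : ∀ d ∈ D, ‖d‖ = 1 → ε ≤ y ⬝ᵥ d) :
    y ∈ interior {s : Fin k → ℝ | ∀ v ∈ D, 0 ≤ s ⬝ᵥ v} := by
  have hkpos : (0:ℝ) < (k : ℝ) + 1 := by positivity
  refine mem_interior.mpr ⟨Metric.ball y (ε / ((k:ℝ) + 1)), ?_, Metric.isOpen_ball,
    Metric.mem_ball_self (by positivity)⟩
  intro s hs v hv
  rcases eq_or_ne v 0 with rfl | hv0
  · simp
  · have hnv : (0:ℝ) < ‖v‖ := norm_pos_iff.mpr hv0
    set w : Fin k → ℝ := ‖v‖⁻¹ • v with hw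
    have hwD : w ∈ D := hcone v hv _ (by positivity)
    have hwn : ‖w‖ = 1 := by
      rw [hw, norm_smul, norm_inv, norm_norm, inv_mul_cancel₀ (ne_of_gt hnv)]
    have hbd : |(s - y) ⬝ᵥ w| ≤ (k : ℝ) * (‖s - y‖ * ‖w‖) := by
      calc |(s - y) ⬝ᵥ w| ≤ ∑ i, |(s - y) i * w i| := Finset.abs_sum_le_sum_abs _ _
      _ ≤ ∑ _i : Fin k, ‖s - y‖ * ‖w‖ := by
          refine Finset.sum_le_sum fun i _ => ?_
          rw [abs_mul]
          exact mul_le_mul (norm_le_pi_norm (s-y) i) (norm_le_pi_norm w i) (abs_nonneg _)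
            (norm_nonneg _)
      _ = (k : ℝ) * (‖s - y‖ * ‖w‖) := by simp [Finset.sum_const, Finset.card_univ]
    have hdist : ‖s - y‖ < ε / ((k:ℝ)+1) := by
      rw [← dist_eq_norm]; exact hs
    have hsw : 0 ≤ s ⬝ᵥ w := by
      have h1 : ε ≤ y ⬝ᵥ w := hbase w hwD hwn
      have h2 : |(s - y) ⬝ᵥ w| ≤ (k:ℝ) * (ε / ((k:ℝ)+1)) := by
        refine hbd.trans ?_
        rw [hwn, mul_one]
        exact mul_le_mul_of_nonneg_left hdist.le (Nat.cast_nonneg k)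
      have h3 : (k:ℝ) * (ε / ((k:ℝ)+1)) < ε := by
        rw [mul_div_assoc']
        rw [div_lt_iff₀ hkpos]
        nlinarith [hε]
      have h4 : s ⬝ᵥ w = y ⬝ᵥ w + (s - y) ⬝ᵥ w := by rw [sub_dotProduct]; ring
      nlinarith [abs_le.mp h2, abs_le.mp (le_refl |(s - y) ⬝ᵥ w|)]
    have hveq : v = ‖v‖ • w := by rw [hw, smul_inv_smul₀ (ne_of_gt hnv)]
    clear_value w
    have hfin : s ⬝ᵥ v = ‖v‖ * (s ⬝ᵥ w) := by
      conv_lhs => rw [hveq]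
      rw [dotProduct_smul, smul_eq_mul]
    rw [hfin]
    exact mul_nonneg (norm_nonneg v) hsw

/-- If `z` is strictly positive on `K \ {0}` for a closed cone `K`, then `z` is in
the interior of the dual cone. -/
lemma mem_interior_dual {K : Set (Fin k → ℝ)} (hcl : IsClosed K)
    (hcone : ∀ x ∈ K, ∀ t : ℝ, 0 ≤ t → t • x ∈ K) {z : Fin k → ℝ}
    (hpos : ∀ v ∈ K, v ≠ 0 → 0 < z ⬝ᵥ v) :
    z ∈ interior {s : Fin k → ℝ | ∀ v ∈ K, 0 ≤ s ⬝ᵥ v} := by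
  set B : Set (Fin k → ℝ) := K ∩ Metric.sphere 0 1 with hB
  have hBc : IsCompact B := (isCompact_sphere (0 : Fin k → ℝ) 1).inter_left hcl
  rcases B.eq_empty_or_nonempty with hBe | hBne
  · refine mem_interior_of_pos_on_base hcone one_pos fun d hd hdn => ?_
    exact absurd (hB ▸ (Set.mem_inter hd (by simpa [mem_sphere_zero_iff_norm] using hdn)))
      (by rw [hBe]; exact Set.notMem_empty _)
  · obtain ⟨v₀, hv₀B, hmin⟩ := hBc.exists_isMinOn hBne
      ((continuous_dotProduct_right z).continuousOn :
        ContinuousOn (fun v : Fin k → ℝ => z ⬝ᵥ v) B)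
    have hv₀n : ‖v₀‖ = 1 := mem_sphere_zero_iff_norm.mp hv₀B.2
    have hv₀0 : v₀ ≠ 0 := fun h => by simp [h] at hv₀n
    have hε : 0 < z ⬝ᵥ v₀ := hpos v₀ hv₀B.1 hv₀0
    refine mem_interior_of_pos_on_base hcone hε fun d hd hdn => ?_
    exact hmin (Set.mem_inter hd (mem_sphere_zero_iff_norm.mpr hdn))

/-- A closed pointed convex cone has a point in the interior of its dual cone. -/
lemma exists_mem_interior_dual {D : Set (Fin k → ℝ)} (hcl : IsClosed D) (hco : Convex ℝ D)
    (hcone : ∀ x ∈ D, ∀ t : ℝ, 0 ≤ t → t • x ∈ D) (h0 : (0 : Fin k → ℝ) ∈ D)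
    (hpt : ∀ x ∈ D, -x ∈ D → x = 0) :
    ∃ y : Fin k → ℝ, y ∈ interior {s : Fin k → ℝ | ∀ v ∈ D, 0 ≤ s ⬝ᵥ v} := by
  by_contra hne
  push_neg at hne
  have hint : ¬ (interior {s : Fin k → ℝ | ∀ v ∈ D, 0 ≤ s ⬝ᵥ v}).Nonempty := by
    rintro ⟨y, hy⟩; exact hne y hy
  set S := {s : Fin k → ℝ | ∀ v ∈ D, 0 ≤ s ⬝ᵥ v} with hS
  have hS0 : (0 : Fin k → ℝ) ∈ S := fun v _ => by simp
  have haff : ¬ affineSpan ℝ S = ⊤ := by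
    intro h
    exact hint ((dual_convex.interior_nonempty_iff_affineSpan_eq_top).mpr h)
  have hvs : ¬ vectorSpan ℝ S = ⊤ := fun h => haff
    ((AffineSubspace.affineSpan_eq_top_iff_vectorSpan_eq_top_of_nonempty ℝ _ _ ⟨0, hS0⟩).mpr h)
  have hsp : Submodule.span ℝ S < ⊤ := by
    rcases lt_or_eq_of_le (le_top : Submodule.span ℝ S ≤ ⊤) with h | h
    · exact h
    · exfalso
      apply hvs
      rw [vectorSpan_def]
      refine top_unique ?_
      rw [← h]
      refine Submodule.span_le.mpr fun x hx => ?_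
      have hmem : x -ᵥ (0 : Fin k → ℝ) ∈ S -ᵥ S := Set.vsub_mem_vsub hx hS0
      simpa using Submodule.subset_span hmem
  obtain ⟨f, hf0, hker⟩ := Submodule.exists_le_ker_of_lt_top _ hsp
  obtain ⟨w, hw⟩ := exists_dot_repr f
  have hfS : ∀ s ∈ S, w ⬝ᵥ s = 0 := by
    intro s hs
    have : f s = 0 := hker (Submodule.subset_span hs)
    rw [hw] at this; exact this
  have hwD : w ∈ D := by
    by_contra hwD
    obtain ⟨y, hy1, hy2⟩ := sep_closed_cone hcl hco hcone h0 hwD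
    have : y ∈ S := hy1
    have h0' := hfS y this
    rw [dotProduct_comm] at h0'
    linarith
  have hwD' : -w ∈ D := by
    by_contra hwD
    obtain ⟨y, hy1, hy2⟩ := sep_closed_cone hcl hco hcone h0 hwD
    have h0' := hfS y hy1
    rw [dotProduct_comm] at h0'
    rw [dotProduct_neg] at hy2
    linarith
  have : w = 0 := hpt w hwD hwD'
  apply hf0
  apply LinearMap.ext
  intro x
  rw [hw, this, zero_dotProduct, LinearMap.zero_apply]

/-- The image of a closed cone under a matrix whose kernel meets the cone trivially
is closed. -/
lemma image_cone_isClosed {m : ℕ} (A : Matrix (Fin m) (Fin k) ℝ) {K : Set (Fin k → ℝ)}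
    (hcl : IsClosed K) (h0 : (0 : Fin k → ℝ) ∈ K)
    (hcone : ∀ x ∈ K, ∀ t : ℝ, 0 ≤ t → t • x ∈ K)
    (hker : ∀ v ∈ K, A *ᵥ v = 0 → v = 0) :
    IsClosed ((fun v => A *ᵥ v) '' K) := by
  have hAc : Continuous fun x : Fin k → ℝ => A *ᵥ x := by
    have := (Matrix.mulVecLin A).continuous_of_finiteDimensional
    exact this
  apply isClosed_of_closure_subset
  intro z hz
  obtain ⟨u, hu, hulim⟩ := mem_closure_iff_seq_limit.mp hz
  choose v hvK hAv using hu
  rcases eq_or_ne z 0 with rfl | hz0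
  · exact ⟨0, h0, by simp⟩
  have hzn : 0 < ‖z‖ := norm_pos_iff.mpr hz0
  obtain ⟨N, hN⟩ := (Metric.tendsto_atTop.mp hulim) ‖z‖ hzn
  set w : ℕ → Fin k → ℝ := fun j => v (j + N) with hwdef
  have hwK : ∀ j, w j ∈ K := fun j => hvK (j + N)
  have hAw : ∀ j, A *ᵥ w j = u (j + N) := fun j => hAv (j + N)
  have hwlim : Tendsto (fun j => A *ᵥ w j) atTop (nhds z) := by
    simp only [hAw]
    exact hulim.comp (tendsto_add_atTop_nat N)
  have hw0 : ∀ j, w j ≠ 0 := by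
    intro j hj
    have h1 : u (j + N) = 0 := by rw [← hAw j, hj, Matrix.mulVec_zero]
    have h2 := hN (j + N) (Nat.le_add_left N j)
    rw [h1, dist_zero_left] at h2
    exact absurd h2 (lt_irrefl _)
  set s : ℕ → Fin k → ℝ := fun j => ‖w j‖⁻¹ • w j with hsdef
  have hsK : ∀ j, s j ∈ K := fun j => hcone _ (hwK j) _ (inv_nonneg.mpr (norm_nonneg _))
  have hsn : ∀ j, ‖s j‖ = 1 := by
    intro j
    rw [hsdef]
    simp only [norm_smul, norm_inv, norm_norm]
    exact inv_mul_cancel₀ (norm_ne_zero_iff.mpr (hw0 j))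
  have hsB : ∀ j, s j ∈ K ∩ Metric.sphere 0 1 := fun j =>
    ⟨hsK j, mem_sphere_zero_iff_norm.mpr (hsn j)⟩
  have hBc : IsCompact (K ∩ Metric.sphere (0 : Fin k → ℝ) 1) :=
    (isCompact_sphere (0 : Fin k → ℝ) 1).inter_left hcl
  obtain ⟨p, hpB, φ, hφ, hslim⟩ := hBc.tendsto_subseq hsB
  have hpn : ‖p‖ = 1 := mem_sphere_zero_iff_norm.mp hpB.2
  have hAp : A *ᵥ p ≠ 0 := by
    intro h
    have := hker p hpB.1 h
    rw [this, norm_zero] at hpn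
    exact absurd hpn (by norm_num)
  have hApn : 0 < ‖A *ᵥ p‖ := norm_pos_iff.mpr hAp
  have hAslim : Tendsto (fun j => A *ᵥ s (φ j)) atTop (nhds (A *ᵥ p)) :=
    ((hAc.tendsto p).comp hslim)
  have hAwφlim : Tendsto (fun j => A *ᵥ w (φ j)) atTop (nhds z) :=
    hwlim.comp hφ.tendsto_atTop
  have hws : ∀ j, w j = ‖w j‖ • s j := by
    intro j
    rw [hsdef]
    rw [smul_inv_smul₀ (norm_ne_zero_iff.mpr (hw0 j))]
  have hAs0 : ∀ j, A *ᵥ s j ≠ 0 := by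
    intro j h
    have := hker _ (hsK j) h
    have h1 := hsn j
    rw [this, norm_zero] at h1
    exact absurd h1 (by norm_num)
  have hceq : ∀ j, ‖w (φ j)‖ = ‖A *ᵥ w (φ j)‖ / ‖A *ᵥ s (φ j)‖ := by
    intro j
    rw [eq_div_iff (norm_ne_zero_iff.mpr (hAs0 (φ j)))]
    conv_lhs => rw [← norm_smul_of_nonneg (norm_nonneg (w (φ j))) (A *ᵥ s (φ j))]
    rw [← Matrix.mulVec_smul, ← hws]
  have hclim : Tendsto (fun j => ‖w (φ j)‖) atTop (nhds (‖z‖ / ‖A *ᵥ p‖)) := by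
    simp only [hceq]
    exact (hAwφlim.norm).div (hAslim.norm) (norm_ne_zero_iff.mpr hAp)
  have hfinal : Tendsto (fun j => ‖w (φ j)‖ • (A *ᵥ s (φ j))) atTop
      (nhds ((‖z‖ / ‖A *ᵥ p‖) • (A *ᵥ p))) := hclim.smul hAslim
  have heqfun : (fun j => ‖w (φ j)‖ • (A *ᵥ s (φ j))) = fun j => A *ᵥ w (φ j) := by
    funext j
    rw [← Matrix.mulVec_smul, ← hws]
  rw [heqfun] at hfinal
  have hzeq : z = (‖z‖ / ‖A *ᵥ p‖) • (A *ᵥ p) := tendsto_nhds_unique hAwφlim hfinal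
  refine ⟨(‖z‖ / ‖A *ᵥ p‖) • p, hcone p hpB.1 _ (div_nonneg (norm_nonneg z) (norm_nonneg _)), ?_⟩
  show A *ᵥ ((‖z‖ / ‖A *ᵥ p‖) • p) = z
  rw [Matrix.mulVec_smul, ← hzeq]

/-- The key separation result: if `D ⊆ C` are closed convex cones with
`D ∩ Lin(C) = {0}`, then there is `y` nonnegative on `C` and strictly positive
on `D \ {0}`. -/
lemma main_sep {C D : Set (Fin k → ℝ)}
    (hCcl : IsClosed C) (hCco : Convex ℝ C)
    (hCcone : ∀ x ∈ C, ∀ t : ℝ, 0 ≤ t → t • x ∈ C) (hC0 : (0 : Fin k → ℝ) ∈ C)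
    (hDcl : IsClosed D) (hDco : Convex ℝ D)
    (hDcone : ∀ x ∈ D, ∀ t : ℝ, 0 ≤ t → t • x ∈ D) (hD0 : (0 : Fin k → ℝ) ∈ D)
    (hDC : D ⊆ C) (hlin : ∀ d ∈ D, -d ∈ C → d = 0) :
    ∃ y : Fin k → ℝ, (∀ c ∈ C, 0 ≤ y ⬝ᵥ c) ∧ ∀ d ∈ D, d ≠ 0 → 0 < y ⬝ᵥ d := by
  set Dstar := {s : Fin k → ℝ | ∀ v ∈ D, 0 ≤ s ⬝ᵥ v} with hDstar
  set Cstar := {s : Fin k → ℝ | ∀ v ∈ C, 0 ≤ s ⬝ᵥ v} with hCstar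
  have hpt : ∀ x ∈ D, -x ∈ D → x = 0 := fun x hx hnx => hlin x hx (hDC hnx)
  obtain ⟨y₀, hy₀⟩ := exists_mem_interior_dual hDcl hDco hDcone hD0 hpt
  by_cases hex : ∃ y, y ∈ interior Dstar ∧ y ∈ Cstar
  · obtain ⟨y, hyD, hyC⟩ := hex
    exact ⟨y, fun c hc => hyC c hc, fun d hd hd0 => interior_dual_pos hyD hd hd0⟩
  · exfalso
    push_neg at hex
    have hdisj : Disjoint (interior Dstar) Cstar := by
      rw [Set.disjoint_left]
      intro a ha ha'
      exact hex a ha ha'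
    obtain ⟨f, u, hfD, hfC⟩ := geometric_hahn_banach_open (dual_convex.interior)
      isOpen_interior dual_convex hdisj
    have hC0star : (0 : Fin k → ℝ) ∈ Cstar := fun v _ => by simp
    have hu0 : u ≤ 0 := by simpa using hfC 0 hC0star
    have hfCpos : ∀ c ∈ Cstar, 0 ≤ f c := by
      intro c hc
      by_contra h
      push_neg at h
      have ht : (0:ℝ) ≤ (u - 1) / f c :=
        div_nonneg_iff.mpr (Or.inr ⟨by linarith, h.le⟩)
      have hmem : (((u-1)/f c) • c) ∈ Cstar := by
        intro v hv
        rw [smul_dotProduct, smul_eq_mul]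
        exact mul_nonneg ht (hc v hv)
      have := hfC _ hmem
      rw [f.map_smul, smul_eq_mul, div_mul_cancel₀ _ (ne_of_lt h)] at this
      linarith
    have hfy₀ : f y₀ < 0 := lt_of_lt_of_le (hfD y₀ hy₀) hu0
    have hfDneg : ∀ d ∈ Dstar, f d ≤ 0 := by
      intro d hd
      by_contra h
      push_neg at h
      set lam : ℝ := (f d / (f d - f y₀)) / 2 with hlam
      have hden : 0 < f d - f y₀ := by linarith
      have hlam0 : 0 < lam := by positivity
      have hlam1 : lam < 1 := by
        rw [hlam]
        have : f d / (f d - f y₀) ≤ 1 := by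
          rw [div_le_one hden]; linarith
        linarith
      have hmem : lam • y₀ + (1 - lam) • d ∈ interior Dstar :=
        dual_convex.combo_interior_self_mem_interior hy₀ hd hlam0 (by linarith) (by ring)
      have hval := hfD _ hmem
      rw [map_add, f.map_smul, f.map_smul, smul_eq_mul, smul_eq_mul] at hval
      have hcalc : lam * f y₀ + (1 - lam) * f d = f d - lam * (f d - f y₀) := by ring
      have hsmall : lam * (f d - f y₀) = f d / 2 := by
        rw [hlam]
        field_simp
      have : 0 < lam * f y₀ + (1 - lam) * f d := by
        rw [hcalc, hsmall]
        linarith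
      linarith [lt_of_lt_of_le hval hu0]
    obtain ⟨w, hw⟩ := exists_dot_repr (f : (Fin k → ℝ) →ₗ[ℝ] ℝ)
    have hw' : ∀ x, f x = w ⬝ᵥ x := fun x => hw x
    have hwC : w ∈ C := by
      by_contra hwC
      obtain ⟨y, hy1, hy2⟩ := sep_closed_cone hCcl hCco hCcone hC0 hwC
      have hyCs : y ∈ Cstar := hy1
      have := hfCpos y hyCs
      rw [hw' y, dotProduct_comm] at this
      linarith
    have hwD : -w ∈ D := by
      by_contra hwD
      obtain ⟨y, hy1, hy2⟩ := sep_closed_cone hDcl hDco hDcone hD0 hwD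
      have hyDs : y ∈ Dstar := hy1
      have := hfDneg y hyDs
      rw [hw' y, dotProduct_comm] at this
      rw [dotProduct_neg] at hy2
      linarith
    have hw0 : w = 0 := by
      have := hlin (-w) hwD (by rwa [neg_neg])
      simpa using this
    have : f y₀ = 0 := by rw [hw' y₀, hw0, zero_dotProduct]
    linarith

end MultifoldAux

open MultifoldAux

/-- Characterization of the set `N` for multifold conic systems:
`i ∈ N` iff `Aᵢ(Kᵢ \ {0})` misses the lineality space of the closure of `AK`. -/
theorem multifold_N_iff {r m : ℕ} (n : Fin r → ℕ) (hn : ∀ i, 0 < n i)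
    (K : ∀ i, Set (Fin (n i) → ℝ)) (A : ∀ i, Matrix (Fin m) (Fin (n i)) ℝ)
    (hK : ∀ i, IsClosed (K i) ∧ Convex ℝ (K i) ∧
      (∀ x ∈ K i, ∀ t : ℝ, 0 ≤ t → t • x ∈ K i) ∧
      (∀ x ∈ K i, -x ∈ K i → x = 0) ∧ (interior (K i)).Nonempty)
    (i : Fin r) :
    let AK : Set (Fin m → ℝ) :=
      {z | ∃ x : ∀ j, Fin (n j) → ℝ, (∀ j, x j ∈ K j) ∧ z = ∑ j, (A j) *ᵥ x j}
    (∃ y : Fin m → ℝ,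
        (∀ j, (A j)ᵀ *ᵥ y ∈ {s | ∀ v ∈ K j, 0 ≤ s ⬝ᵥ v}) ∧
        (A i)ᵀ *ᵥ y ∈ interior {s | ∀ v ∈ K i, 0 ≤ s ⬝ᵥ v}) ↔
    ((fun v => (A i) *ᵥ v) '' (K i \ {0}) ∩
      {z | z ∈ closure AK ∧ -z ∈ closure AK}) = ∅ := by
  intro AK
  -- basic facts
  have hK0 : ∀ j, (0 : Fin (n j) → ℝ) ∈ K j := by
    intro j
    obtain ⟨x, hx⟩ := (hK j).2.2.2.2
    have := (hK j).2.2.1 x (interior_subset hx) 0 le_rfl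
    simpa using this
  have hAK0 : (0 : Fin m → ℝ) ∈ AK :=
    ⟨fun _ => 0, fun j => hK0 j, by simp [Matrix.mulVec_zero]⟩
  have hsingle : ∀ j, ∀ v ∈ K j, (A j) *ᵥ v ∈ AK := by
    intro j v hv
    refine ⟨Function.update (fun j' => (0 : Fin (n j') → ℝ)) j v, ?_, ?_⟩
    · intro j'
      rcases eq_or_ne j' j with rfl | hne
      · rw [Function.update_self]; exact hv
      · rw [Function.update_of_ne hne]; exact hK0 j'
    · rw [Finset.sum_eq_single j]
      · rw [Function.update_self]
      · intro b _ hb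
        rw [Function.update_of_ne hb, Matrix.mulVec_zero]
      · intro hj; exact absurd (Finset.mem_univ j) hj
  have hAKcone : ∀ z ∈ AK, ∀ t : ℝ, 0 ≤ t → t • z ∈ AK := by
    rintro z ⟨x, hx, rfl⟩ t ht
    refine ⟨fun j => t • x j, fun j => (hK j).2.2.1 _ (hx j) t ht, ?_⟩
    rw [Finset.smul_sum]
    exact Finset.sum_congr rfl fun j _ => (Matrix.mulVec_smul _ _ _).symm
  have hAKadd : ∀ z1 ∈ AK, ∀ z2 ∈ AK, z1 + z2 ∈ AK := by
    rintro z1 ⟨x1, hx1, rfl⟩ z2 ⟨x2, hx2, rfl⟩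
    refine ⟨fun j => x1 j + x2 j, fun j => ?_, ?_⟩
    · have h2 := (hK j).2.1 (hx1 j) (hx2 j) (by norm_num : (0:ℝ) ≤ 1/2)
        (by norm_num : (0:ℝ) ≤ 1/2) (by norm_num)
      have h3 := (hK j).2.2.1 _ h2 2 (by norm_num)
      have h4 : (2:ℝ) • ((1/2 : ℝ) • x1 j + (1/2 : ℝ) • x2 j) = x1 j + x2 j := by
        rw [smul_add, smul_smul, smul_smul]
        norm_num
      rwa [h4] at h3
    · rw [← Finset.sum_add_distrib]
      exact Finset.sum_congr rfl fun j _ => (Matrix.mulVec_add _ _ _).symm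
  have hAKconv : Convex ℝ AK := by
    intro z1 h1 z2 h2 a b ha hb _
    exact hAKadd _ (hAKcone z1 h1 a ha) _ (hAKcone z2 h2 b hb)
  -- the closed cone C = closure AK
  have hCcl : IsClosed (closure AK) := isClosed_closure
  have hCco : Convex ℝ (closure AK) := hAKconv.closure
  have hC0 : (0 : Fin m → ℝ) ∈ closure AK := subset_closure hAK0
  have hCcone : ∀ c ∈ closure AK, ∀ t : ℝ, 0 ≤ t → t • c ∈ closure AK := by
    intro c hc t ht
    have h1 : t • c ∈ closure ((fun z : Fin m → ℝ => t • z) '' AK) :=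
      image_closure_subset_closure_image (continuous_const_smul t) ⟨c, hc, rfl⟩
    refine closure_mono ?_ h1
    rintro _ ⟨z, hz, rfl⟩
    exact hAKcone z hz t ht
  -- transpose-dot identity
  have hTdot : ∀ (j : Fin r) (y : Fin m → ℝ) (v : Fin (n j) → ℝ),
      ((A j)ᵀ *ᵥ y) ⬝ᵥ v = y ⬝ᵥ ((A j) *ᵥ v) := by
    intro j y v
    rw [Matrix.mulVec_transpose, Matrix.dotProduct_mulVec]
  have hdotsum : ∀ (y : Fin m → ℝ) (g : Fin r → Fin m → ℝ),
      y ⬝ᵥ (∑ j, g j) = ∑ j, y ⬝ᵥ g j := by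
    intro y g
    simp only [dotProduct, Finset.sum_apply, Finset.mul_sum]
    exact Finset.sum_comm
  constructor
  · rintro ⟨y, hy1, hy2⟩
    rw [Set.eq_empty_iff_forall_notMem]
    rintro z ⟨⟨v, ⟨hvK, hv0⟩, rfl⟩, hzC, hzC'⟩
    have hyak : ∀ c ∈ AK, 0 ≤ y ⬝ᵥ c := by
      rintro c ⟨x, hx, rfl⟩
      rw [hdotsum]
      refine Finset.sum_nonneg fun j _ => ?_
      rw [← hTdot]
      exact hy1 j (x j) (hx j)
    have hycl : ∀ c ∈ closure AK, 0 ≤ y ⬝ᵥ c := by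
      have hclosed : IsClosed {c : Fin m → ℝ | 0 ≤ y ⬝ᵥ c} :=
        isClosed_le continuous_const (continuous_dotProduct_right y)
      exact fun c hc => closure_minimal hyak hclosed hc
    have h1 := hycl _ hzC
    have h2 := hycl _ hzC'
    rw [dotProduct_neg] at h2
    have h3 : 0 < ((A i)ᵀ *ᵥ y) ⬝ᵥ v :=
      interior_dual_pos hy2 hvK (by simpa using hv0)
    rw [hTdot] at h3
    linarith
  · intro hemp
    have hemp' : ∀ v ∈ K i, v ≠ 0 →
        ¬(((A i) *ᵥ v ∈ closure AK) ∧ (-((A i) *ᵥ v) ∈ closure AK)) := by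
      intro v hv hv0 hmem
      have hin : (A i) *ᵥ v ∈ ((fun v => (A i) *ᵥ v) '' (K i \ {0}) ∩
          {z | z ∈ closure AK ∧ -z ∈ closure AK}) :=
        ⟨⟨v, ⟨hv, hv0⟩, rfl⟩, hmem⟩
      rw [hemp] at hin
      exact hin
    have hker : ∀ v ∈ K i, (A i) *ᵥ v = 0 → v = 0 := by
      intro v hv h0
      by_contra hne
      exact hemp' v hv hne (by rw [h0]; exact ⟨hC0, by simpa using hC0⟩)
    set D := (fun v => (A i) *ᵥ v) '' (K i) with hDdef
    have hDcl : IsClosed D := image_cone_isClosed (A i) (hK i).1 (hK0 i) (hK i).2.2.1 hker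
    have hDco : Convex ℝ D := by
      rintro _ ⟨v1, h1, rfl⟩ _ ⟨v2, h2, rfl⟩ a b ha hb hab
      refine ⟨a • v1 + b • v2, (hK i).2.1 h1 h2 ha hb hab, ?_⟩
      show (A i) *ᵥ (a • v1 + b • v2) = a • (fun v => (A i) *ᵥ v) v1 + b • (fun v => (A i) *ᵥ v) v2
      rw [Matrix.mulVec_add, Matrix.mulVec_smul, Matrix.mulVec_smul]
    have hDcone : ∀ x ∈ D, ∀ t : ℝ, 0 ≤ t → t • x ∈ D := by
      rintro _ ⟨v1, h1, rfl⟩ t ht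
      refine ⟨t • v1, (hK i).2.2.1 _ h1 t ht, ?_⟩
      show (A i) *ᵥ (t • v1) = t • (fun v => (A i) *ᵥ v) v1
      rw [Matrix.mulVec_smul]
    have hD0 : (0 : Fin m → ℝ) ∈ D := ⟨0, hK0 i, by simp⟩
    have hDC : D ⊆ closure AK := by
      rintro _ ⟨v1, h1, rfl⟩
      exact subset_closure (hsingle i v1 h1)
    have hlin : ∀ d ∈ D, -d ∈ closure AK → d = 0 := by
      rintro _ ⟨v1, h1, rfl⟩ hneg
      by_contra hne
      have hv0 : v1 ≠ 0 := by
        intro h; apply hne; rw [h]; simp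
      exact hemp' v1 h1 hv0 ⟨subset_closure (hsingle i v1 h1), hneg⟩
    obtain ⟨y, hyC, hyD⟩ := main_sep hCcl hCco hCcone hC0 hDcl hDco hDcone hD0 hDC hlin
    refine ⟨y, fun j v hv => ?_, ?_⟩
    · rw [hTdot]
      exact hyC _ (subset_closure (hsingle j v hv))
    · apply mem_interior_dual (hK i).1 (hK i).2.2.1
      intro v hv hv0
      rw [hTdot]
      exact hyD _ ⟨v, hv, rfl⟩ fun h => hv0 (hker v hv h)
end

section
/- Let K = K₁ × ⋯ × K_r be a product of regular closed convex cones and A = [A₁ ⋯ A_r]. For each i, the following are equivalent: (1) every y with Aᵀy ∈ K* satisfies Aᵢᵀy = 0; (2) the relative interior of AᵢKᵢ intersects the lineality space of the closure of AK; (3) AᵢKᵢ is contained in Lin(closure(AK)). -/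
open Matrix Set

private lemma ri_extend {m : ℕ} {s : Set (Fin m → ℝ)} {x y : Fin m → ℝ}
    (hx : x ∈ intrinsicInterior ℝ s) (hy : y ∈ s) :
    ∃ t : ℝ, 0 < t ∧ x + t • (x - y) ∈ s := by
  rw [mem_intrinsicInterior] at hx
  obtain ⟨x', hx', hxx⟩ := hx
  have hxs : x ∈ affineSpan ℝ s := hxx ▸ x'.2
  have hys : y ∈ affineSpan ℝ s := subset_affineSpan ℝ s hy
  have hd : x - y ∈ (affineSpan ℝ s).direction := by
    simpa using AffineSubspace.vsub_mem_direction hxs hys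
  have hmem : ∀ t : ℝ, x + t • (x - y) ∈ affineSpan ℝ s := by
    intro t
    have := AffineSubspace.vadd_mem_of_mem_direction
      (Submodule.smul_mem _ t hd) hxs
    simpa [vadd_eq_add, add_comm] using this
  set c : ℝ → affineSpan ℝ s := fun t => ⟨x + t • (x - y), hmem t⟩ with hc
  have hcont : Continuous c := by
    apply Continuous.subtype_mk
    exact continuous_const.add (continuous_id.smul continuous_const)
  have hc0 : c 0 = x' := by
    apply Subtype.ext
    simp [hc, hxx]
  have hU : IsOpen (c ⁻¹' interior (((↑) : affineSpan ℝ s → _) ⁻¹' s)) :=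
    isOpen_interior.preimage hcont
  have h0 : (0 : ℝ) ∈ c ⁻¹' interior (((↑) : affineSpan ℝ s → _) ⁻¹' s) := by
    simp only [Set.mem_preimage, hc0]; exact hx'
  obtain ⟨ε, hε, hball⟩ := Metric.isOpen_iff.mp hU 0 h0
  refine ⟨ε / 2, by linarith, ?_⟩
  have : c (ε / 2) ∈ interior (((↑) : affineSpan ℝ s → _) ⁻¹' s) := by
    apply hball
    simp only [Metric.mem_ball, Real.dist_eq, sub_zero]
    rw [abs_of_pos (by linarith)]
    linarith
  have h2 : c (ε / 2) ∈ (((↑) : affineSpan ℝ s → _) ⁻¹' s) := interior_subset this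
  exact h2

/-- Characterization of the set `B₀` for multifold conic systems: `i ∈ B₀` iff
`ri (AᵢKᵢ)` meets `Lin(closure AK)`, iff `AᵢKᵢ ⊆ Lin(closure AK)`. -/
theorem multifold_B0_iff {r m : ℕ} (n : Fin r → ℕ) (hn : ∀ i, 0 < n i)
    (K : ∀ i, Set (Fin (n i) → ℝ)) (A : ∀ i, Matrix (Fin m) (Fin (n i)) ℝ)
    (hK : ∀ i, IsClosed (K i) ∧ Convex ℝ (K i) ∧
      (∀ x ∈ K i, ∀ t : ℝ, 0 ≤ t → t • x ∈ K i) ∧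
      (∀ x ∈ K i, -x ∈ K i → x = 0) ∧ (interior (K i)).Nonempty)
    (i : Fin r) :
    let AK : Set (Fin m → ℝ) :=
      {z | ∃ x : ∀ j, Fin (n j) → ℝ, (∀ j, x j ∈ K j) ∧ z = ∑ j, (A j) *ᵥ x j}
    let L : Set (Fin m → ℝ) := {z | z ∈ closure AK ∧ -z ∈ closure AK}
    ((∀ y : Fin m → ℝ,
        (∀ j, (A j)ᵀ *ᵥ y ∈ {s | ∀ v ∈ K j, 0 ≤ s ⬝ᵥ v}) → (A i)ᵀ *ᵥ y = 0) ↔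
      (intrinsicInterior ℝ ((fun v => (A i) *ᵥ v) '' K i) ∩ L).Nonempty) ∧
    ((intrinsicInterior ℝ ((fun v => (A i) *ᵥ v) '' K i) ∩ L).Nonempty ↔
      (fun v => (A i) *ᵥ v) '' K i ⊆ L) := by
  intro AK L
  have hKconv : ∀ j, Convex ℝ (K j) := fun j => (hK j).2.1
  have hKsmul : ∀ j, ∀ x ∈ K j, ∀ t : ℝ, 0 ≤ t → t • x ∈ K j := fun j => (hK j).2.2.1
  have hKint : ∀ j, (interior (K j)).Nonempty := fun j => (hK j).2.2.2.2
  have hK0 : ∀ j, (0 : Fin (n j) → ℝ) ∈ K j := by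
    intro j
    obtain ⟨x, hx⟩ := hKint j
    simpa using hKsmul j x (interior_subset hx) 0 le_rfl
  set C : Set (Fin m → ℝ) := (fun v => (A i) *ᵥ v) '' K i with hC
  -- each A_j K_j sits inside AK
  have hAKj : ∀ j, ∀ v ∈ K j, (A j) *ᵥ v ∈ AK := by
    intro j v hv
    refine ⟨Pi.single j v, ?_, ?_⟩
    · intro j'
      by_cases h : j' = j
      · subst h; simpa using hv
      · rw [Pi.single_eq_of_ne h]; exact hK0 j'
    · rw [Finset.sum_eq_single j]
      · rw [Pi.single_eq_same]
      · intro b _ hb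
        rw [Pi.single_eq_of_ne hb, mulVec_zero]
      · intro h; exact absurd (Finset.mem_univ j) h
  have hCsub : C ⊆ AK := by
    rintro z ⟨v, hv, rfl⟩; exact hAKj i v hv
  have hAK0 : (0 : Fin m → ℝ) ∈ AK := by
    refine ⟨fun j => 0, fun j => hK0 j, ?_⟩
    simp [mulVec_zero]
  -- AK is a convex cone
  have hAKsmul : ∀ z ∈ AK, ∀ t : ℝ, 0 ≤ t → t • z ∈ AK := by
    rintro z ⟨x, hx, rfl⟩ t ht
    refine ⟨fun j => t • x j, fun j => hKsmul j (x j) (hx j) t ht, ?_⟩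
    simp [mulVec_smul, Finset.smul_sum]
  have hAKadd : ∀ z ∈ AK, ∀ w ∈ AK, z + w ∈ AK := by
    rintro z ⟨x, hx, rfl⟩ w ⟨x', hx', rfl⟩
    refine ⟨fun j => x j + x' j, ?_, ?_⟩
    · intro j
      have := (hKconv j) (hx j) (hx' j) (le_of_lt one_half_pos) (le_of_lt one_half_pos)
        (by norm_num)
      have h2 := hKsmul j _ this 2 (by norm_num)
      have : (2 : ℝ) • ((1/2 : ℝ) • x j + (1/2 : ℝ) • x' j) = x j + x' j := by
        rw [smul_add, smul_smul, smul_smul]; norm_num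
      rwa [this] at h2
    · simp [mulVec_add, Finset.sum_add_distrib]
  have hAKconv : Convex ℝ AK := by
    intro z hz w hw a b ha hb _
    exact hAKadd _ (hAKsmul z hz a ha) _ (hAKsmul w hw b hb)
  -- closure AK is a convex cone
  have hclsmul : ∀ z ∈ closure AK, ∀ t : ℝ, 0 ≤ t → t • z ∈ closure AK := by
    intro z hz t ht
    exact map_mem_closure (continuous_const_smul t) hz (fun a ha => hAKsmul a ha t ht)
  have hcladd : ∀ z ∈ closure AK, ∀ w ∈ closure AK, z + w ∈ closure AK := by
    intro z hz w hw
    exact map_mem_closure₂ continuous_add hz hw hAKadd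
  -- dot product identities
  have hdot : ∀ (j : Fin r) (y : Fin m → ℝ) (v : Fin (n j) → ℝ),
      ((A j)ᵀ *ᵥ y) ⬝ᵥ v = y ⬝ᵥ ((A j) *ᵥ v) := by
    intro j y v
    rw [mulVec_transpose, dotProduct_mulVec]
  have hdotcont : ∀ y : Fin m → ℝ, Continuous fun z : Fin m → ℝ => y ⬝ᵥ z := by
    intro y
    unfold dotProduct
    exact continuous_finset_sum _ fun k _ => continuous_const.mul (continuous_apply k)
  -- dual feasibility gives nonnegativity on closure AK
  have hfeas : ∀ y : Fin m → ℝ,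
      (∀ j, (A j)ᵀ *ᵥ y ∈ {s | ∀ v ∈ K j, 0 ≤ s ⬝ᵥ v}) →
      ∀ z ∈ closure AK, 0 ≤ y ⬝ᵥ z := by
    intro y hy z hz
    have hAKle : AK ⊆ {z | 0 ≤ y ⬝ᵥ z} := by
      rintro z' ⟨x, hx, rfl⟩
      have : y ⬝ᵥ ∑ j, (A j) *ᵥ x j = ∑ j, y ⬝ᵥ ((A j) *ᵥ x j) := by
        simp only [dotProduct, Finset.sum_apply, Finset.mul_sum]
        exact Finset.sum_comm
      rw [Set.mem_setOf_eq, this]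
      refine Finset.sum_nonneg fun j _ => ?_
      rw [← hdot]
      exact hy j (x j) (hx j)
    have hcl : closure AK ⊆ {z | 0 ≤ y ⬝ᵥ z} :=
      closure_minimal hAKle (isClosed_le continuous_const (hdotcont y))
    exact hcl hz
  -- a dual vector vanishing on K i must have zero image under A iᵀ
  have hzero : ∀ y : Fin m → ℝ,
      (∀ v ∈ K i, ((A i)ᵀ *ᵥ y) ⬝ᵥ v = 0) → (A i)ᵀ *ᵥ y = 0 := by
    intro y hy
    set w : Fin (n i) → ℝ := (A i)ᵀ *ᵥ y with hw
    let f : (Fin (n i) → ℝ) →ₗ[ℝ] ℝ :=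
      { toFun := fun v => w ⬝ᵥ v
        map_add' := fun a b => dotProduct_add w a b
        map_smul' := fun t a => by
          simp [dotProduct, Finset.mul_sum, mul_assoc, mul_left_comm] }
    have hker : Submodule.span ℝ (K i) ≤ LinearMap.ker f := by
      rw [Submodule.span_le]
      intro v hv
      exact LinearMap.mem_ker.mpr (hy v hv)
    have hspan : Submodule.span ℝ (K i) = ⊤ :=
      Submodule.eq_top_of_nonempty_interior' _
        ((hKint i).mono (interior_mono Submodule.subset_span))
    have hwker : w ∈ LinearMap.ker f := hker (hspan ▸ Submodule.mem_top)
    have : w ⬝ᵥ w = 0 := hwker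
    exact dotProduct_self_eq_zero.mp this
  -- (3) → (1)
  have h31 : C ⊆ L → (∀ y : Fin m → ℝ,
      (∀ j, (A j)ᵀ *ᵥ y ∈ {s | ∀ v ∈ K j, 0 ≤ s ⬝ᵥ v}) → (A i)ᵀ *ᵥ y = 0) := by
    intro h3 y hy
    apply hzero
    intro v hv
    have hL : (A i) *ᵥ v ∈ L := h3 ⟨v, hv, rfl⟩
    have h1 := hfeas y hy _ hL.1
    have h2 := hfeas y hy _ hL.2
    rw [dotProduct_neg] at h2
    rw [hdot]
    linarith
  -- (1) → (3)
  have h13 : (∀ y : Fin m → ℝ,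
      (∀ j, (A j)ᵀ *ᵥ y ∈ {s | ∀ v ∈ K j, 0 ≤ s ⬝ᵥ v}) → (A i)ᵀ *ᵥ y = 0) →
      C ⊆ L := by
    intro h1
    rintro z ⟨v, hv, rfl⟩
    refine ⟨subset_closure (hAKj i v hv), ?_⟩
    by_contra hneg
    obtain ⟨f, u, hfu, huf⟩ :=
      geometric_hahn_banach_closed_point hAKconv.closure isClosed_closure hneg
    have hu0 : 0 < u := by
      have := hfu 0 (subset_closure hAK0)
      simpa using this
    have hfle : ∀ z ∈ closure AK, f z ≤ 0 := by
      intro a ha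
      by_contra hpos
      push_neg at hpos
      have hmem : ((u + 1) / f a) • a ∈ closure AK :=
        hclsmul a ha _ (div_nonneg (by linarith) (le_of_lt hpos))
      have := hfu _ hmem
      rw [f.map_smul, smul_eq_mul, div_mul_cancel₀ _ (ne_of_gt hpos)] at this
      linarith
    set y : Fin m → ℝ := fun k => -(f (fun j' => if k = j' then 1 else 0)) with hy
    have hyz : ∀ z : Fin m → ℝ, y ⬝ᵥ z = -(f z) := by
      intro z
      have hrep : f z = ∑ k, z k • f (fun j' => if k = j' then 1 else 0) :=
        (f : (Fin m → ℝ) →ₗ[ℝ] ℝ).pi_apply_eq_sum_univ z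
      rw [hrep]
      simp only [dotProduct, hy, smul_eq_mul, ← Finset.sum_neg_distrib]
      exact Finset.sum_congr rfl fun k _ => by ring
    have hyfeas : ∀ j, (A j)ᵀ *ᵥ y ∈ {s | ∀ v ∈ K j, 0 ≤ s ⬝ᵥ v} := by
      intro j v' hv'
      rw [hdot, hyz]
      have := hfle _ (subset_closure (hAKj j v' hv'))
      linarith
    have hAiy : (A i)ᵀ *ᵥ y = 0 := h1 y hyfeas
    have hzero' : y ⬝ᵥ ((A i) *ᵥ v) = 0 := by
      rw [← hdot, hAiy, zero_dotProduct]
    rw [hyz] at hzero'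
    rw [map_neg] at huf
    linarith
  -- (2) → (3)
  have h23 : (intrinsicInterior ℝ C ∩ L).Nonempty → C ⊆ L := by
    rintro ⟨z, hzri, hzL⟩
    intro w hw
    refine ⟨subset_closure (hCsub hw), ?_⟩
    obtain ⟨t, ht, hmem⟩ := ri_extend hzri hw
    have h1 : z + t • (z - w) ∈ closure AK := subset_closure (hCsub hmem)
    have h2 : (1 + t) • (-z) ∈ closure AK := hclsmul _ hzL.2 (1 + t) (by linarith)
    have h3 : (z + t • (z - w)) + (1 + t) • (-z) ∈ closure AK := hcladd _ h1 _ h2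
    have he : (z + t • (z - w)) + (1 + t) • (-z) = t • (-w) := by module
    rw [he] at h3
    have h4 := hclsmul _ h3 (1 / t) (by positivity)
    rwa [smul_smul, one_div, inv_mul_cancel₀ (ne_of_gt ht), one_smul] at h4
  -- (3) → (2)
  have h32 : C ⊆ L → (intrinsicInterior ℝ C ∩ L).Nonempty := by
    intro h3
    have hCne : C.Nonempty := ⟨(A i) *ᵥ 0, 0, hK0 i, rfl⟩
    have hCconv : Convex ℝ C :=
      (hKconv i).is_linear_image ⟨fun a b => mulVec_add _ a b, fun t a => mulVec_smul _ t a⟩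
    obtain ⟨z, hz⟩ := hCne.intrinsicInterior hCconv
    exact ⟨z, hz, h3 (intrinsicInterior_subset hz)⟩
  exact ⟨⟨fun h => h32 (h13 h), fun h => h31 (h23 h)⟩, ⟨h23, h32⟩⟩
end

section
/- Let K = K₁ × ⋯ × K_r be a product of regular closed convex cones and A = [A₁ ⋯ A_r]. For each i, the following are equivalent: (1) every x ∈ K with Ax = 0 satisfies xᵢ = 0; (2) Aᵢ(Kᵢ \ {0}) ∩ Lin(AK) = ∅. -/
open Matrix

/-- Characterization of the set `N₀` for multifold conic systems: `i ∈ N₀` iff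
`Aᵢ(Kᵢ \ {0})` misses the lineality space of `AK`. -/
theorem multifold_N0_iff {r m : ℕ} (n : Fin r → ℕ) (hn : ∀ i, 0 < n i)
    (K : ∀ i, Set (Fin (n i) → ℝ)) (A : ∀ i, Matrix (Fin m) (Fin (n i)) ℝ)
    (hK : ∀ i, IsClosed (K i) ∧ Convex ℝ (K i) ∧
      (∀ x ∈ K i, ∀ t : ℝ, 0 ≤ t → t • x ∈ K i) ∧
      (∀ x ∈ K i, -x ∈ K i → x = 0) ∧ (interior (K i)).Nonempty)
    (i : Fin r) :
    let AK : Set (Fin m → ℝ) :=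
      {z | ∃ x : ∀ j, Fin (n j) → ℝ, (∀ j, x j ∈ K j) ∧ z = ∑ j, (A j) *ᵥ x j}
    (∀ x : ∀ j, Fin (n j) → ℝ,
        (∀ j, x j ∈ K j) → (∑ j, (A j) *ᵥ x j) = 0 → x i = 0) ↔
    ((fun v => (A i) *ᵥ v) '' (K i \ {0}) ∩ {z | z ∈ AK ∧ -z ∈ AK}) = ∅ := by
  intro AK
  have h0 : ∀ j, (0 : Fin (n j) → ℝ) ∈ K j := by
    intro j
    obtain ⟨x, hx⟩ := (hK j).2.2.2.2
    have := (hK j).2.2.1 x (interior_subset hx) 0 le_rfl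
    simpa using this
  have hadd : ∀ j, ∀ x ∈ K j, ∀ y ∈ K j, x + y ∈ K j := by
    intro j x hx y hy
    have h := (hK j).2.1 hx hy (by norm_num : (0:ℝ) ≤ 1/2)
      (by norm_num : (0:ℝ) ≤ 1/2) (by norm_num)
    have h2 := (hK j).2.2.1 _ h 2 (by norm_num)
    have : (2:ℝ) • ((1/2 : ℝ) • x + (1/2 : ℝ) • y) = x + y := by
      module
    rwa [this] at h2
  constructor
  · intro h
    rw [Set.eq_empty_iff_forall_notMem]
    rintro z ⟨⟨v, ⟨hv, hv0⟩, rfl⟩, ⟨-, y, hy, hz'⟩⟩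
    set w : ∀ j, Fin (n j) → ℝ := Function.update y i (y i + v) with hw_def
    have hw : ∀ j, w j ∈ K j := by
      intro j
      by_cases hj : j = i
      · subst hj
        simpa [hw_def] using hadd _ _ (hy j) _ hv
      · simpa [hw_def, Function.update_of_ne hj] using hy j
    have hsum : ∑ j, A j *ᵥ w j = 0 := by
      have hterm : ∀ j, A j *ᵥ w j = A j *ᵥ y j + (if j = i then A i *ᵥ v else 0) := by
        intro j
        by_cases hj : j = i
        · subst hj; simp [hw_def, Matrix.mulVec_add]
        · simp [hw_def, Function.update_of_ne hj, hj]
      simp_rw [hterm, Finset.sum_add_distrib, Finset.sum_ite_eq' Finset.univ i]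
      simp [← hz']
    have := h w hw hsum
    have hwi : y i + v = 0 := by simpa [hw_def] using this
    have hvy : -v = y i := (eq_neg_of_add_eq_zero_left hwi).symm
    have : v = 0 := (hK i).2.2.2.1 v hv (by rw [hvy]; exact hy i)
    exact hv0 this
  · intro h x hx hsum
    by_contra hxi
    have hz : A i *ᵥ x i ∈
        ((fun v => (A i) *ᵥ v) '' (K i \ {0}) ∩ {z | z ∈ AK ∧ -z ∈ AK}) := by
      refine ⟨⟨x i, ⟨hx i, hxi⟩, rfl⟩, ?_, ?_⟩
      · refine ⟨Function.update (fun j => (0 : Fin (n j) → ℝ)) i (x i), ?_, ?_⟩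
        · intro j
          by_cases hj : j = i
          · subst hj; simpa using hx j
          · simpa [Function.update_of_ne hj] using h0 j
        · have hterm : ∀ j, A j *ᵥ Function.update (fun j => (0 : Fin (n j) → ℝ)) i (x i) j
              = (if j = i then A i *ᵥ x i else 0) := by
            intro j
            by_cases hj : j = i
            · subst hj; simp
            · simp [Function.update_of_ne hj, hj]
          simp_rw [hterm, Finset.sum_ite_eq' Finset.univ i]
          simp
      · refine ⟨Function.update x i 0, ?_, ?_⟩
        · intro j
          by_cases hj : j = i
          · subst hj; simpa using h0 j
          · simpa [Function.update_of_ne hj] using hx j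
        · have hterm : ∀ j, A j *ᵥ Function.update x i 0 j
              = A j *ᵥ x j + (if j = i then -(A i *ᵥ x i) else 0) := by
            intro j
            by_cases hj : j = i
            · subst hj; simp
            · simp [Function.update_of_ne hj, hj]
          simp_rw [hterm, Finset.sum_add_distrib, Finset.sum_ite_eq' Finset.univ i]
          simp [hsum]
    rw [h] at hz
    exact hz
end
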